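/- arXiv:2102.12834 — 4 statements merged into one kernel-verified Lean document; each statement's English description precedes it below -/
import Mathlib

section
/- Positive invariance of the state space: for the coupled epidemic–opinion system ẋ_i = −[δ_min + (δ_i − δ_min)(o_i + 0.5)] x_i + (1 − x_i) Σ_{j∈N_i} [β_ij − (β_ij − β_min)(o_i + 0.5)] x_j and ȯ_i = (x_i − (o_i + 0.5)) + Σ_{j∈N̄_i} |ā_ij(o)| (sign(ā_ij(o)) o_j − o_i), if at some time t one has x_i(t) ∈ [0,1] and o_i(t) ∈ [−0.5, 0.5] for all i ∈ [n], then x_i(t+τ) ∈ [0,1] and o_i(t+τ) ∈ [−0.5, 0.5] for all i ∈ [n] and all τ ≥ 0. -/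
open Matrix Filter Set

noncomputable section

/-- The modified sign function: `1` if `0 ≤ x`, `-1` otherwise. -/
def sgnm (x : ℝ) : ℝ := if 0 ≤ x then 1 else -1

/-- Gauge transformation matrix `Φ(o) = diag(sgnm o₁, …, sgnm oₙ)`. -/
def gaugeMat {n : ℕ} (o : Fin n → ℝ) : Matrix (Fin n) (Fin n) ℝ :=
  Matrix.diagonal fun i => sgnm (o i)

/-- Graph Laplacian of a nonnegative adjacency matrix with zero diagonal. -/
def lapOf {n : ℕ} (A : Matrix (Fin n) (Fin n) ℝ) : Matrix (Fin n) (Fin n) ℝ :=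
  Matrix.diagonal (fun i => ∑ j, A i j) - A

/-- Irreducibility of a (nonnegative) matrix: between any two indices some power
has a strictly positive entry. -/
def MatIrreducible {n : ℕ} (M : Matrix (Fin n) (Fin n) ℝ) : Prop :=
  ∀ i j : Fin n, ∃ k : ℕ, 1 ≤ k ∧ 0 < (M ^ k) i j

/-- Spectral radius of a real square matrix, as the largest modulus of a complex
eigenvalue. -/
def specRad {m : Type*} [Fintype m] [DecidableEq m] (A : Matrix m m ℝ) : ℝ :=
  sSup ((fun z : ℂ => ‖z‖) '' spectrum ℂ (A.map (algebraMap ℝ ℂ)))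

/-- Spectral abscissa of a real square matrix, as the largest real part of a
complex eigenvalue. -/
def specAbs {m : Type*} [Fintype m] [DecidableEq m] (A : Matrix m m ℝ) : ℝ :=
  sSup (Complex.re '' spectrum ℂ (A.map (algebraMap ℝ ℂ)))

/-- A real square matrix is Hurwitz if all its (complex) eigenvalues have
negative real part. -/
def IsHurwitz {m : Type*} [Fintype m] [DecidableEq m] (A : Matrix m m ℝ) : Prop :=
  ∀ z ∈ spectrum ℂ (A.map (algebraMap ℝ ℂ)), z.re < 0

/-- The data of the coupled networked SIS epidemic–opinion model over `n`
communities. -/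
structure EpiOpModel (n : ℕ) where
  /-- healing rates -/
  δ : Fin n → ℝ
  /-- minimum healing rate -/
  δmin : ℝ
  /-- minimum infection rate -/
  βmin : ℝ
  /-- unweighted adjacency matrix `Ã` of the (strongly connected) epidemic graph -/
  Atil : Matrix (Fin n) (Fin n) ℝ
  /-- infection matrix `B = [β_ij]` -/
  B : Matrix (Fin n) (Fin n) ℝ
  /-- nonnegative adjacency matrix `Ā_u` of the (strongly connected) opinion graph -/
  Au : Matrix (Fin n) (Fin n) ℝ
  δmin_pos : 0 < δmin
  δ_ge : ∀ i, δmin ≤ δ i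
  βmin_pos : 0 < βmin
  Atil_01 : ∀ i j, Atil i j = 0 ∨ Atil i j = 1
  Atil_diag : ∀ i, Atil i i = 0
  B_edge : ∀ i j, Atil i j = 1 → βmin ≤ B i j
  B_off : ∀ i j, Atil i j = 0 → B i j = 0
  B_irred : MatIrreducible B
  Au_nonneg : ∀ i j, 0 ≤ Au i j
  Au_diag : ∀ i, Au i i = 0
  Au_irred : MatIrreducible Au

namespace EpiOpModel

/-- The state space `[0,1]^n × [−0.5, 0.5]^n`. -/
def InBox {n : ℕ} (_M : EpiOpModel n) (x o : Fin n → ℝ) : Prop :=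
  (∀ i, x i ∈ Set.Icc (0:ℝ) 1) ∧ (∀ i, o i ∈ Set.Icc (-(1/2) : ℝ) (1/2))

variable {n : ℕ} (M : EpiOpModel n)

/-- `B_min = β_min Ã`. -/
def Bmin : Matrix (Fin n) (Fin n) ℝ := M.βmin • M.Atil

/-- `D = diag(δ₁, …, δₙ)`. -/
def Dmax : Matrix (Fin n) (Fin n) ℝ := Matrix.diagonal M.δ

/-- `D_min = δ_min I`. -/
def Dmin : Matrix (Fin n) (Fin n) ℝ := M.δmin • (1 : Matrix (Fin n) (Fin n) ℝ)

/-- Opinion-dependent healing matrix `D(o) = D_min + (D − D_min)(O + 0.5 I)`. -/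
def Dmat (o : Fin n → ℝ) : Matrix (Fin n) (Fin n) ℝ :=
  Matrix.diagonal fun i => M.δmin + (M.δ i - M.δmin) * (o i + 1/2)

/-- Opinion-dependent infection matrix `B(o) = B − (O + 0.5 I)(B − B_min)`. -/
def Bmat (o : Fin n → ℝ) : Matrix (Fin n) (Fin n) ℝ :=
  Matrix.of fun i j => M.B i j - (o i + 1/2) * (M.B i j - M.Bmin i j)

/-- Laplacian `L̄_u` of the opinion adjacency matrix. -/
def Lu : Matrix (Fin n) (Fin n) ℝ := lapOf M.Au

/-- Signed opinion Laplacian `Φ(o) L̄_u Φ(o)`. -/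
def Lsgn (o : Fin n → ℝ) : Matrix (Fin n) (Fin n) ℝ :=
  gaugeMat o * M.Lu * gaugeMat o

/-- Epidemic vector field `ẋ = −D(o)x + (I − X)B(o)x`. -/
def fx (x o : Fin n → ℝ) : Fin n → ℝ :=
  -(M.Dmat o).mulVec x +
    (Matrix.diagonal fun i => 1 - x i).mulVec ((M.Bmat o).mulVec x)

/-- Opinion vector field `ȯ = x − (Φ(o) L̄_u Φ(o) + I) o − 0.5 e`. -/
def fo (x o : Fin n → ℝ) : Fin n → ℝ :=
  x - (M.Lsgn o + 1).mulVec o - (fun _ => (1/2 : ℝ))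

/-- Equilibria of the coupled system. -/
def IsEquilibrium (x o : Fin n → ℝ) : Prop := M.fx x o = 0 ∧ M.fo x o = 0

/-- Trajectories (solutions) of the coupled system. -/
def IsTrajectory (x o : ℝ → Fin n → ℝ) : Prop :=
  ∀ t : ℝ, ∀ i : Fin n,
    HasDerivAt (fun s => x s i) (M.fx (x t) (o t) i) t ∧
    HasDerivAt (fun s => o s i) (M.fo (x t) (o t) i) t

/-- The Opinion-Dependent Reproduction Number `R^o = ρ(D(o)⁻¹ B(o))`. -/
def Rnum (o : Fin n → ℝ) : ℝ := specRad ((M.Dmat o)⁻¹ * M.Bmat o)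

/-- `R_max = ρ(D_min⁻¹ B)`. -/
def Rmax : ℝ := specRad (M.Dmin⁻¹ * M.B)

/-- `R_min = ρ(D⁻¹ B_min)`. -/
def Rmin : ℝ := specRad (M.Dmax⁻¹ * M.Bmin)

/-- `W(o) = −D(o) + B(o)`. -/
def Wmat (o : Fin n → ℝ) : Matrix (Fin n) (Fin n) ℝ := -(M.Dmat o) + M.Bmat o

/-- Jacobian matrix of the coupled system evaluated at a healthy equilibrium
`(0, o)`: block lower triangular with diagonal blocks `W(o)` and
`−(Φ(o) L̄_u Φ(o) + I)`. -/
def JacHealthy (o : Fin n → ℝ) : Matrix (Fin n ⊕ Fin n) (Fin n ⊕ Fin n) ℝ :=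
  Matrix.fromBlocks (M.Wmat o) 0 1 (-(M.Lsgn o + 1))

/-- Lyapunov stability of an equilibrium of the coupled system. -/
def LyapunovStable (xe oe : Fin n → ℝ) : Prop :=
  ∀ ε > 0, ∃ δ > 0, ∀ x o : ℝ → Fin n → ℝ, M.IsTrajectory x o →
    dist (x 0, o 0) (xe, oe) < δ → ∀ t ≥ 0, dist (x t, o t) (xe, oe) < ε

/-- Local exponential stability of an equilibrium of the coupled system. -/
def LocExpStable (xe oe : Fin n → ℝ) : Prop :=
  ∃ δ > 0, ∃ C > 0, ∃ α > 0, ∀ x o : ℝ → Fin n → ℝ, M.IsTrajectory x o →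
    dist (x 0, o 0) (xe, oe) < δ →
    ∀ t ≥ 0, dist (x t, o t) (xe, oe) ≤
      C * Real.exp (-α * t) * dist (x 0, o 0) (xe, oe)

end EpiOpModel


open scoped Topology


namespace PosInvAux

/-- Clamp a real number into `[lo, hi]`. -/
def clampf (lo hi y : ℝ) : ℝ := max lo (min y hi)

lemma clampf_mem {lo hi : ℝ} (h : lo ≤ hi) (y : ℝ) : clampf lo hi y ∈ Set.Icc lo hi :=
  ⟨le_max_left _ _, max_le h (min_le_right _ _)⟩

lemma clampf_eq_of_mem {lo hi y : ℝ} (hy : y ∈ Set.Icc lo hi) : clampf lo hi y = y := by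
  unfold clampf
  rw [min_eq_left hy.2, max_eq_right hy.1]

lemma clampf_nearest {lo hi y v : ℝ} (hv : v ∈ Set.Icc lo hi) :
    |y - clampf lo hi y| ≤ |y - v| := by
  obtain ⟨h1, h2⟩ := hv
  unfold clampf
  rcases le_total y hi with hyh | hyh
  · rw [min_eq_left hyh]
    rcases le_total lo y with hly | hly
    · rw [max_eq_right hly]; simp [abs_nonneg]
    · rw [max_eq_left hly, abs_of_nonpos (by linarith)]
      have := neg_abs_le (y - v)
      linarith
  · rw [min_eq_right hyh, max_eq_right (le_trans h1 h2)]
    rw [abs_of_nonneg (by linarith)]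
    have := le_abs_self (y - v)
    linarith

lemma continuous_clampf (lo hi : ℝ) : Continuous (clampf lo hi) :=
  continuous_const.max (continuous_id.min continuous_const)

lemma step_mem {lo hi v g C h : ℝ} (hv : v ∈ Set.Icc lo hi) (hC : 0 < C)
    (hg1 : -(C * (v - lo)) ≤ g) (hg2 : g ≤ C * (hi - v)) (hh0 : 0 ≤ h) (hh : h * C ≤ 1) :
    v + h * g ∈ Set.Icc lo hi := by
  obtain ⟨h1, h2⟩ := hv
  constructor
  · nlinarith [mul_le_mul_of_nonneg_left hg1 hh0]
  · nlinarith [mul_le_mul_of_nonneg_left hg2 hh0]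

/-- Abstract positive-invariance lemma for a box, via a Grönwall estimate on the
ℓ¹ distance to the box. -/
lemma box_invariance {ι : Type*} [Fintype ι] (y F : ℝ → ι → ℝ) (lo hi : ι → ℝ)
    (hlohi : ∀ i, lo i ≤ hi i)
    (hd : ∀ s : ℝ, ∀ i, HasDerivAt (fun z => y z i) (F s i) s)
    (a b : ℝ) (L : ℝ) (hL : 0 ≤ L)
    (key : ∀ s ∈ Set.Icc a b, ∃ G : ι → ℝ, ∃ C : ℝ, 0 < C ∧
        (∀ i, -(C * (clampf (lo i) (hi i) (y s i) - lo i)) ≤ G i ∧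
              G i ≤ C * (hi i - clampf (lo i) (hi i) (y s i))) ∧
        (∑ i, |F s i - G i|) ≤ L * ∑ i, |y s i - clampf (lo i) (hi i) (y s i)|)
    (h0 : ∀ i, y a i ∈ Set.Icc (lo i) (hi i)) :
    ∀ s ∈ Set.Icc a b, ∀ i, y s i ∈ Set.Icc (lo i) (hi i) := by
  set u : ℝ → ℝ := fun s => ∑ i, |y s i - clampf (lo i) (hi i) (y s i)| with hu_def
  have hy_cont : ∀ i, Continuous fun s => y s i := fun i =>
    continuous_iff_continuousAt.2 fun s => (hd s i).continuousAt
  have hu_cont : Continuous u := by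
    apply continuous_finset_sum
    intro i _
    exact ((hy_cont i).sub ((continuous_clampf _ _).comp (hy_cont i))).abs
  have hu_nonneg : ∀ s, 0 ≤ u s := fun s =>
    Finset.sum_nonneg fun i _ => abs_nonneg _
  have term_le : ∀ s i, |y s i - clampf (lo i) (hi i) (y s i)| ≤ u s := by
    intro s i
    exact Finset.single_le_sum (f := fun j => |y s j - clampf (lo j) (hi j) (y s j)|)
      (fun j _ => abs_nonneg _) (Finset.mem_univ i)
  have hua : u a = 0 := by
    apply Finset.sum_eq_zero
    intro i _
    rw [clampf_eq_of_mem (h0 i), sub_self, abs_zero]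
  -- Grönwall
  have main : ∀ s ∈ Set.Icc a b, u s ≤ gronwallBound 0 L 0 (s - a) := by
    apply le_gronwallBound_of_liminf_deriv_right_le (f' := fun s => L * u s)
      hu_cont.continuousOn _ (le_of_eq hua)
      (fun s _ => by simp)
    intro s hs r hr
    obtain ⟨G, C, hC, htang, hlip⟩ := key s (Set.mem_Icc.2 ⟨hs.1, le_of_lt hs.2⟩)
    set m : ℕ := Fintype.card ι
    have hr' : L * u s < r := hr
    set ε : ℝ := r - L * u s with hε_def
    have hε : 0 < ε := by rw [hε_def]; linarith
    set ε' : ℝ := ε / (2 * (m + 1)) with hε'_def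
    have hε' : 0 < ε' := by positivity
    -- eventual smallness from derivatives
    have hev1 : ∀ᶠ z in 𝓝[>] s, ∀ i, |y z i - y s i - (z - s) * F s i| ≤ ε' * (z - s) := by
      rw [eventually_all]
      intro i
      have h1 := ((hd s i).isLittleO.bound hε').filter_mono (nhdsWithin_le_nhds (s := Set.Ioi s))
      have h2 : ∀ᶠ z in 𝓝[>] s, s < z := eventually_mem_nhdsWithin
      filter_upwards [h1, h2] with z hz hz'
      rw [Real.norm_eq_abs, Real.norm_eq_abs] at hz
      calc |y z i - y s i - (z - s) * F s i| = |y z i - y s i - (z - s) • F s i| := by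
            rw [smul_eq_mul]
        _ ≤ ε' * |z - s| := hz
        _ = ε' * (z - s) := by rw [abs_of_pos (by linarith)]
    have hev2 : ∀ᶠ z in 𝓝[>] s, z ∈ Set.Ioo s (s + 1 / C) :=
      Ioo_mem_nhdsGT (by linarith [one_div_pos.2 hC])
    apply Filter.Eventually.frequently
    filter_upwards [hev1, hev2] with z hz1 hz2
    set h : ℝ := z - s with hh_def
    have hh0 : 0 < h := by simp only [hh_def]; exact sub_pos.2 hz2.1
    have hhC : h * C ≤ 1 := by
      have : h < 1 / C := by simp only [hh_def]; linarith [hz2.2]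
      calc h * C ≤ (1 / C) * C := by nlinarith
        _ = 1 := by field_simp
    -- pointwise estimate
    have step : ∀ i, |y z i - clampf (lo i) (hi i) (y z i)| ≤
        |y s i - clampf (lo i) (hi i) (y s i)| + h * |F s i - G i| + ε' * h := by
      intro i
      set w : ℝ := clampf (lo i) (hi i) (y s i) with hw_def
      have hwmem : w ∈ Set.Icc (lo i) (hi i) := clampf_mem (hlohi i) _
      have hmem : w + h * G i ∈ Set.Icc (lo i) (hi i) :=
        step_mem hwmem hC (htang i).1 (htang i).2 (le_of_lt hh0) hhC
      calc |y z i - clampf (lo i) (hi i) (y z i)| ≤ |y z i - (w + h * G i)| :=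
            clampf_nearest hmem
        _ = |(y z i - y s i - h * F s i) + (y s i - w) + h * (F s i - G i)| := by
            ring_nf
        _ ≤ |y z i - y s i - h * F s i| + |y s i - w| + |h * (F s i - G i)| := by
            exact (abs_add_three _ _ _)
        _ ≤ ε' * h + |y s i - w| + h * |F s i - G i| := by
            rw [abs_mul, abs_of_pos hh0]
            exact add_le_add (add_le_add (hz1 i) le_rfl) le_rfl
        _ = |y s i - w| + h * |F s i - G i| + ε' * h := by ring
    have hsum : u z ≤ u s + h * (L * u s) + (m : ℝ) * (ε' * h) := by
      calc u z ≤ ∑ i, (|y s i - clampf (lo i) (hi i) (y s i)| + h * |F s i - G i| + ε' * h) :=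
            Finset.sum_le_sum fun i _ => step i
        _ = u s + h * (∑ i, |F s i - G i|) + (m : ℝ) * (ε' * h) := by
            rw [Finset.sum_add_distrib, Finset.sum_add_distrib, ← Finset.mul_sum,
              Finset.sum_const, Finset.card_univ, nsmul_eq_mul]
        _ ≤ u s + h * (L * u s) + (m : ℝ) * (ε' * h) := by
            have := mul_le_mul_of_nonneg_left hlip (le_of_lt hh0)
            linarith
    have hmε : (m : ℝ) * ε' ≤ ε / 2 := by
      rw [hε'_def, ← mul_div_assoc]
      rw [div_le_div_iff₀ (by positivity) (by norm_num)]
      nlinarith [mul_nonneg (Nat.cast_nonneg (α := ℝ) m) hε.le]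
    rw [inv_mul_lt_iff₀ hh0]
    have : (m : ℝ) * (ε' * h) ≤ (ε / 2) * h := by
      have := mul_le_mul_of_nonneg_right hmε (le_of_lt hh0)
      linarith [this]
    calc u z - u s ≤ h * (L * u s) + (m : ℝ) * (ε' * h) := by linarith
      _ ≤ h * (L * u s) + (ε / 2) * h := by linarith
      _ < h * r := by
          have : L * u s + ε / 2 < r := by rw [hε_def] at hε ⊢ <;> linarith
          nlinarith
  -- conclude
  intro s hs i
  have hus : u s = 0 := by
    have h1 := main s hs
    rw [gronwallBound_ε0_δ0] at h1
    linarith [hu_nonneg s]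
  have hzero : |y s i - clampf (lo i) (hi i) (y s i)| = 0 := by
    have h1 := term_le s i
    have h2 := abs_nonneg (y s i - clampf (lo i) (hi i) (y s i))
    linarith
  have : y s i = clampf (lo i) (hi i) (y s i) := by
    have := abs_eq_zero.1 hzero; linarith
  rw [this]
  exact clampf_mem (hlohi i) _

end PosInvAux
open Matrix Filter Set
open scoped Topology

lemma sgnm_cases (y : ℝ) : sgnm y = 1 ∨ sgnm y = -1 := by
  unfold sgnm; split_ifs <;> simp

lemma sgnm_mul_self (y : ℝ) : sgnm y * sgnm y = 1 := by
  rcases sgnm_cases y with h | h <;> rw [h] <;> norm_num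

lemma sgnm_mul_eq_abs (y : ℝ) : sgnm y * y = |y| := by
  unfold sgnm
  split_ifs with h
  · rw [one_mul, abs_of_nonneg h]
  · rw [abs_of_neg (lt_of_not_ge h)]; ring

lemma abs_sgnm (y : ℝ) : |sgnm y| = 1 := by
  rcases sgnm_cases y with h | h <;> rw [h] <;> norm_num

lemma sgnm_clampf (y : ℝ) : sgnm (PosInvAux.clampf (-(1/2)) (1/2) y) = sgnm y := by
  unfold PosInvAux.clampf sgnm
  rcases le_or_gt 0 y with h | h
  · rw [if_pos h, if_pos (le_max_of_le_right (le_min h (by norm_num)))]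
  · rw [if_neg (not_le.2 h),
      if_neg (not_le.2 (max_lt (by norm_num) (lt_of_le_of_lt (min_le_left _ _) h)))]

lemma abs_add₅ (a b c d e : ℝ) : |a + b + c + d + e| ≤ |a| + |b| + |c| + |d| + |e| := by
  calc |a + b + c + d + e| ≤ |a + b + c + d| + |e| := abs_add_le _ _
    _ ≤ (|a + b + c| + |d|) + |e| := by linarith [abs_add_le (a+b+c) d]
    _ ≤ ((|a + b| + |c|) + |d|) + |e| := by linarith [abs_add_le (a+b) c]
    _ ≤ |a| + |b| + |c| + |d| + |e| := by linarith [abs_add_le a b]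

namespace EpiOpModel

variable {n : ℕ} (M : EpiOpModel n)

lemma B_nonneg (i j : Fin n) : 0 ≤ M.B i j := by
  rcases M.Atil_01 i j with h | h
  · rw [M.B_off i j h]
  · exact le_trans M.βmin_pos.le (M.B_edge i j h)

lemma Bmin_nonneg (i j : Fin n) : 0 ≤ M.βmin * M.Atil i j := by
  rcases M.Atil_01 i j with h | h <;> rw [h]
  · rw [mul_zero]
  · rw [mul_one]; exact M.βmin_pos.le

lemma Bmin_le (i j : Fin n) : M.βmin * M.Atil i j ≤ M.B i j := by
  rcases M.Atil_01 i j with h | h <;> rw [h]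
  · rw [mul_zero]; exact M.B_nonneg i j
  · rw [mul_one]; exact M.B_edge i j h

lemma fx_apply (x o : Fin n → ℝ) (i : Fin n) :
    M.fx x o i = -((M.δmin + (M.δ i - M.δmin) * (o i + 1/2)) * x i) +
      (1 - x i) * ∑ j, (M.B i j - (o i + 1/2) * (M.B i j - M.βmin * M.Atil i j)) * x j := by
  simp only [fx, Dmat, Bmat, Bmin, Pi.add_apply, Pi.neg_apply, Matrix.mulVec_diagonal]
  simp only [Matrix.mulVec, dotProduct, Matrix.of_apply, Matrix.smul_apply, smul_eq_mul]

lemma fo_apply (x o : Fin n → ℝ) (i : Fin n) :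
    M.fo x o i = x i - ((∑ j, (sgnm (o i) * M.Lu i j * sgnm (o j)) * o j) + o i) - 1/2 := by
  simp only [fo, Lsgn, gaugeMat, Pi.sub_apply, Matrix.add_mulVec, Matrix.one_mulVec,
    Pi.add_apply]
  simp only [Matrix.mulVec, dotProduct, Matrix.mul_diagonal, Matrix.diagonal_mul]

end EpiOpModel


set_option maxHeartbeats 1000000

/-- Auxiliary Lipschitz constant for the epidemic part. -/
def KxAux {n : ℕ} (M : EpiOpModel n) (R : ℝ) (i : Fin n) : ℝ :=
  M.δmin + (M.δ i - M.δmin) * (R + 2)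
    + (1 + R) * ((∑ j, (M.B i j + (R + 1) * (M.B i j - M.βmin * M.Atil i j)))
        + ∑ j, (M.B i j - M.βmin * M.Atil i j))
    + ∑ j, (M.B i j + (M.B i j - M.βmin * M.Atil i j))

/-- Auxiliary Lipschitz constant for the opinion part. -/
def KoAux {n : ℕ} (M : EpiOpModel n) (i : Fin n) : ℝ := 1 + ∑ j, (|M.Lu i j| + 1)

/-- Auxiliary global Lipschitz constant. -/
def LAux {n : ℕ} (M : EpiOpModel n) (R : ℝ) : ℝ := (∑ i, KxAux M R i) + ∑ i, KoAux M i

namespace EpiOpModel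

variable {n : ℕ} (M : EpiOpModel n)

lemma fo_formula (xv ov : Fin n → ℝ) (i : Fin n) :
    M.fo xv ov i = xv i - 1/2 - ov i - (∑ j, M.Au i j) * ov i
      + sgnm (ov i) * ∑ j, M.Au i j * |ov j| := by
  rw [fo_apply]
  have hsplit : ∀ j : Fin n, (sgnm (ov i) * M.Lu i j * sgnm (ov j)) * ov j
      = (if i = j then sgnm (ov i) * ((∑ k, M.Au i k) * (sgnm (ov j) * ov j)) else 0)
        - sgnm (ov i) * (M.Au i j * (sgnm (ov j) * ov j)) := by
    intro j
    simp only [Lu, lapOf, Matrix.sub_apply, Matrix.diagonal_apply]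
    split_ifs with h
    · ring
    · ring
  have h1 : (∑ j, (sgnm (ov i) * M.Lu i j * sgnm (ov j)) * ov j)
      = (∑ j, (if i = j then sgnm (ov i) * ((∑ k, M.Au i k) * (sgnm (ov j) * ov j)) else 0))
        - ∑ j, sgnm (ov i) * (M.Au i j * (sgnm (ov j) * ov j)) := by
    rw [← Finset.sum_sub_distrib]
    exact Finset.sum_congr rfl fun j _ => hsplit j
  have h2 : (∑ j, (if i = j then sgnm (ov i) * ((∑ k, M.Au i k) * (sgnm (ov j) * ov j)) else 0))
      = sgnm (ov i) * ((∑ k, M.Au i k) * (sgnm (ov i) * ov i)) := by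
    simp
  have h3 : sgnm (ov i) * ((∑ k, M.Au i k) * (sgnm (ov i) * ov i)) = (∑ k, M.Au i k) * ov i := by
    calc sgnm (ov i) * ((∑ k, M.Au i k) * (sgnm (ov i) * ov i))
        = (sgnm (ov i) * sgnm (ov i)) * ((∑ k, M.Au i k) * ov i) := by ring
      _ = (∑ k, M.Au i k) * ov i := by rw [sgnm_mul_self, one_mul]
  have h4 : (∑ j, sgnm (ov i) * (M.Au i j * (sgnm (ov j) * ov j)))
      = sgnm (ov i) * ∑ j, M.Au i j * |ov j| := by
    rw [Finset.mul_sum]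
    exact Finset.sum_congr rfl fun j _ => by rw [sgnm_mul_eq_abs]
  rw [h1, h2, h3, h4]
  ring

lemma tangx (i : Fin n) (w ω : Fin n → ℝ) (hw : ∀ j, w j ∈ Set.Icc (0:ℝ) 1)
    (hω : ∀ j, ω j ∈ Set.Icc (-(1/2):ℝ) (1/2)) (C : ℝ)
    (hδle : M.δ i ≤ C) (hBrow : (∑ j, M.B i j) ≤ C) :
    -(C * (w i - 0)) ≤ M.fx w ω i ∧ M.fx w ω i ≤ C * (1 - w i) := by
  rw [fx_apply]
  have hc0 : 0 ≤ ω i + 1/2 := by linarith [(hω i).1]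
  have hc1 : ω i + 1/2 ≤ 1 := by linarith [(hω i).2]
  have hb : ∀ j, 0 ≤ M.B i j - (ω i + 1/2) * (M.B i j - M.βmin * M.Atil i j) ∧
      M.B i j - (ω i + 1/2) * (M.B i j - M.βmin * M.Atil i j) ≤ M.B i j := by
    intro j
    have h1 := M.Bmin_le i j
    have h2 := M.Bmin_nonneg i j
    constructor <;> nlinarith
  have hT0 : 0 ≤ ∑ j, (M.B i j - (ω i + 1/2) * (M.B i j - M.βmin * M.Atil i j)) * w j :=
    Finset.sum_nonneg fun j _ => mul_nonneg (hb j).1 (hw j).1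
  have hT1 : (∑ j, (M.B i j - (ω i + 1/2) * (M.B i j - M.βmin * M.Atil i j)) * w j)
      ≤ ∑ j, M.B i j := by
    apply Finset.sum_le_sum
    intro j _
    calc (M.B i j - (ω i + 1/2) * (M.B i j - M.βmin * M.Atil i j)) * w j
        ≤ M.B i j * 1 := mul_le_mul (hb j).2 (hw j).2 (hw j).1 (M.B_nonneg i j)
      _ = M.B i j := mul_one _
  have hd1 : M.δmin + (M.δ i - M.δmin) * (ω i + 1/2) ≤ M.δ i := by
    nlinarith [sub_nonneg.2 (M.δ_ge i)]
  constructor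
  · have h1 : (M.δmin + (M.δ i - M.δmin) * (ω i + 1/2)) * w i ≤ C * w i :=
      mul_le_mul_of_nonneg_right (le_trans hd1 hδle) (hw i).1
    have h2 : 0 ≤ (1 - w i) *
        ∑ j, (M.B i j - (ω i + 1/2) * (M.B i j - M.βmin * M.Atil i j)) * w j :=
      mul_nonneg (by linarith [(hw i).2]) hT0
    linarith
  · have h1 : 0 ≤ (M.δmin + (M.δ i - M.δmin) * (ω i + 1/2)) * w i :=
      mul_nonneg (by nlinarith [M.δmin_pos, sub_nonneg.2 (M.δ_ge i)]) (hw i).1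
    have h2 : (1 - w i) * (∑ j, (M.B i j - (ω i + 1/2) * (M.B i j - M.βmin * M.Atil i j)) * w j)
        ≤ (1 - w i) * ∑ j, M.B i j :=
      mul_le_mul_of_nonneg_left hT1 (by linarith [(hw i).2])
    have h3 : (1 - w i) * (∑ j, M.B i j) ≤ (1 - w i) * C :=
      mul_le_mul_of_nonneg_left hBrow (by linarith [(hw i).2])
    have h4 : (1 - w i) * C = C * (1 - w i) := mul_comm _ _
    linarith

lemma tango (i : Fin n) (w ω : Fin n → ℝ) (hw : ∀ j, w j ∈ Set.Icc (0:ℝ) 1)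
    (hω : ∀ j, ω j ∈ Set.Icc (-(1/2):ℝ) (1/2)) (C : ℝ)
    (hAurow : 1 + (∑ j, M.Au i j) ≤ C) :
    -(C * (ω i - -(1/2))) ≤ M.fo w ω i ∧ M.fo w ω i ≤ C * (1/2 - ω i) := by
  rw [fo_formula]
  have hSA0 : 0 ≤ ∑ j, M.Au i j := Finset.sum_nonneg fun j _ => M.Au_nonneg i j
  have hP0 : 0 ≤ ∑ j, M.Au i j * |ω j| :=
    Finset.sum_nonneg fun j _ => mul_nonneg (M.Au_nonneg i j) (abs_nonneg _)
  have hP1 : (∑ j, M.Au i j * |ω j|) ≤ (∑ j, M.Au i j) * (1/2) := by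
    rw [Finset.sum_mul]
    apply Finset.sum_le_sum
    intro j _
    apply mul_le_mul_of_nonneg_left _ (M.Au_nonneg i j)
    rw [abs_le]
    exact ⟨by linarith [(hω j).1], (hω j).2⟩
  have hsgnP : -(∑ j, M.Au i j * |ω j|) ≤ sgnm (ω i) * (∑ j, M.Au i j * |ω j|) ∧
      sgnm (ω i) * (∑ j, M.Au i j * |ω j|) ≤ ∑ j, M.Au i j * |ω j| := by
    rcases sgnm_cases (ω i) with h | h <;> rw [h] <;> constructor <;> linarith
  constructor
  · have h1 : (1 + ∑ j, M.Au i j) * (ω i - -(1/2)) ≤ C * (ω i - -(1/2)) :=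
      mul_le_mul_of_nonneg_right hAurow (by linarith [(hω i).1])
    nlinarith [(hw i).1, hsgnP.1]
  · have h1 : (1 + ∑ j, M.Au i j) * (1/2 - ω i) ≤ C * (1/2 - ω i) :=
      mul_le_mul_of_nonneg_right hAurow (by linarith [(hω i).2])
    nlinarith [(hw i).2, hsgnP.2]

lemma lipo (i : Fin n) (ξ θ w ω : Fin n → ℝ) (u : ℝ) (hu0 : 0 ≤ u)
    (hpx : ∀ j, |ξ j - w j| ≤ u) (hpo : ∀ j, |θ j - ω j| ≤ u)
    (hsgn : ∀ j, sgnm (ω j) = sgnm (θ j)) :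
    |M.fo ξ θ i - M.fo w ω i| ≤ KoAux M i * u := by
  have hdiff : M.fo ξ θ i - M.fo w ω i
      = (ξ i - w i) - (∑ j, (sgnm (θ i) * M.Lu i j * sgnm (θ j)) * (θ j - ω j))
        - (θ i - ω i) := by
    rw [fo_apply, fo_apply]
    simp only [hsgn]
    have e : (∑ j, (sgnm (θ i) * M.Lu i j * sgnm (θ j)) * (θ j - ω j))
        = (∑ j, (sgnm (θ i) * M.Lu i j * sgnm (θ j)) * θ j)
          - ∑ j, (sgnm (θ i) * M.Lu i j * sgnm (θ j)) * ω j := by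
      rw [← Finset.sum_sub_distrib]
      exact Finset.sum_congr rfl fun j _ => by ring
    rw [e]
    ring
  rw [hdiff]
  have hS : |∑ j, (sgnm (θ i) * M.Lu i j * sgnm (θ j)) * (θ j - ω j)|
      ≤ (∑ j, |M.Lu i j|) * u := by
    calc |∑ j, (sgnm (θ i) * M.Lu i j * sgnm (θ j)) * (θ j - ω j)|
        ≤ ∑ j, |(sgnm (θ i) * M.Lu i j * sgnm (θ j)) * (θ j - ω j)| :=
          Finset.abs_sum_le_sum_abs _ _
      _ ≤ ∑ j, |M.Lu i j| * u := by
          apply Finset.sum_le_sum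
          intro j _
          rw [abs_mul, abs_mul, abs_mul, abs_sgnm, abs_sgnm, one_mul, mul_one]
          exact mul_le_mul_of_nonneg_left (hpo j) (abs_nonneg _)
      _ = (∑ j, |M.Lu i j|) * u := by rw [Finset.sum_mul]
  have htri : |(ξ i - w i) - (∑ j, (sgnm (θ i) * M.Lu i j * sgnm (θ j)) * (θ j - ω j))
        - (θ i - ω i)|
      ≤ |ξ i - w i| + |∑ j, (sgnm (θ i) * M.Lu i j * sgnm (θ j)) * (θ j - ω j)|
        + |θ i - ω i| := by
    have t1 : |(ξ i - w i) - (∑ j, (sgnm (θ i) * M.Lu i j * sgnm (θ j)) * (θ j - ω j))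
          - (θ i - ω i)|
        ≤ |(ξ i - w i) - (∑ j, (sgnm (θ i) * M.Lu i j * sgnm (θ j)) * (θ j - ω j))|
          + |θ i - ω i| := abs_sub _ _
    have t2 : |(ξ i - w i) - (∑ j, (sgnm (θ i) * M.Lu i j * sgnm (θ j)) * (θ j - ω j))|
        ≤ |ξ i - w i| + |∑ j, (sgnm (θ i) * M.Lu i j * sgnm (θ j)) * (θ j - ω j)| :=
      abs_sub _ _
    linarith
  have hn : (1:ℝ) ≤ (n:ℝ) := by exact_mod_cast i.pos
  have hLu0 : (0:ℝ) ≤ ∑ j, |M.Lu i j| := Finset.sum_nonneg fun j _ => abs_nonneg _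
  have hKo : KoAux M i = 1 + ((∑ j, |M.Lu i j|) + n) := by
    unfold KoAux
    rw [Finset.sum_add_distrib, Finset.sum_const, Finset.card_univ, Fintype.card_fin,
      nsmul_eq_mul, mul_one]
  rw [hKo]
  have hbn : ((n:ℝ) - 1) * u ≥ 0 := mul_nonneg (by linarith) hu0
  nlinarith [hpx i, hpo i, hS, htri]

lemma lipx (i : Fin n) (ξ θ w ω : Fin n → ℝ) (R u : ℝ) (hR0 : 0 ≤ R)
    (hξR : ∀ j, |ξ j| ≤ R) (hθR : ∀ j, |θ j| ≤ R)
    (hw : ∀ j, w j ∈ Set.Icc (0:ℝ) 1) (hω : ∀ j, ω j ∈ Set.Icc (-(1/2):ℝ) (1/2))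
    (hu0 : 0 ≤ u) (hpx : ∀ j, |ξ j - w j| ≤ u) (hpo : ∀ j, |θ j - ω j| ≤ u) :
    |M.fx ξ θ i - M.fx w ω i| ≤ KxAux M R i * u := by
  have hE0 : ∀ j, (0:ℝ) ≤ M.B i j - M.βmin * M.Atil i j := fun j =>
    sub_nonneg.2 (M.Bmin_le i j)
  obtain ⟨hθl, hθr⟩ := abs_le.1 (hθR i)
  obtain ⟨hξl, hξr⟩ := abs_le.1 (hξR i)
  have hcR : |θ i + 1/2| ≤ R + 1 := by rw [abs_le]; constructor <;> linarith
  have hc'0 : 0 ≤ ω i + 1/2 := by linarith [(hω i).1]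
  have hc'1 : ω i + 1/2 ≤ 1 := by linarith [(hω i).2]
  have e1 : (∑ j, (M.B i j - (θ i + 1/2) * (M.B i j - M.βmin * M.Atil i j)) * (ξ j - w j))
      = (∑ j, (M.B i j - (θ i + 1/2) * (M.B i j - M.βmin * M.Atil i j)) * ξ j)
        - ∑ j, (M.B i j - (θ i + 1/2) * (M.B i j - M.βmin * M.Atil i j)) * w j := by
    rw [← Finset.sum_sub_distrib]
    exact Finset.sum_congr rfl fun j _ => by ring
  have e2 : (∑ j, (M.B i j - (ω i + 1/2) * (M.B i j - M.βmin * M.Atil i j)) * w j)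
      = (∑ j, (M.B i j - (θ i + 1/2) * (M.B i j - M.βmin * M.Atil i j)) * w j)
        + (θ i - ω i) * ∑ j, (M.B i j - M.βmin * M.Atil i j) * w j := by
    rw [Finset.mul_sum, ← Finset.sum_add_distrib]
    exact Finset.sum_congr rfl fun j _ => by ring
  have hid : M.fx ξ θ i - M.fx w ω i
      = -(M.δmin * (ξ i - w i))
        + -((M.δ i - M.δmin) * ((θ i + 1/2) * ξ i - (ω i + 1/2) * w i))
        + (1 - ξ i) *
            (∑ j, (M.B i j - (θ i + 1/2) * (M.B i j - M.βmin * M.Atil i j)) * (ξ j - w j))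
        + -((1 - ξ i) * ((θ i - ω i) * ∑ j, (M.B i j - M.βmin * M.Atil i j) * w j))
        + (w i - ξ i) *
            (∑ j, (M.B i j - (ω i + 1/2) * (M.B i j - M.βmin * M.Atil i j)) * w j) := by
    rw [fx_apply, fx_apply, e1, e2]
    ring
  have hwa : ∀ j, |w j| ≤ 1 := fun j => by
    rw [abs_le]; exact ⟨by linarith [(hw j).1], (hw j).2⟩
  -- piecewise bounds
  have b1 : |-(M.δmin * (ξ i - w i))| ≤ M.δmin * u := by
    rw [abs_neg, abs_mul, abs_of_pos M.δmin_pos]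
    exact mul_le_mul_of_nonneg_left (hpx i) M.δmin_pos.le
  have hca : |(θ i + 1/2) * ξ i - (ω i + 1/2) * w i| ≤ (R + 2) * u := by
    have h1 : (θ i + 1/2) * ξ i - (ω i + 1/2) * w i
        = (θ i + 1/2) * (ξ i - w i) + w i * (θ i - ω i) := by ring
    rw [h1]
    calc |(θ i + 1/2) * (ξ i - w i) + w i * (θ i - ω i)|
        ≤ |(θ i + 1/2) * (ξ i - w i)| + |w i * (θ i - ω i)| := abs_add_le _ _
      _ ≤ (R + 1) * u + 1 * u := by
          rw [abs_mul, abs_mul]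
          exact add_le_add (mul_le_mul hcR (hpx i) (abs_nonneg _) (by linarith))
            (mul_le_mul (hwa i) (hpo i) (abs_nonneg _) (by norm_num))
      _ = (R + 2) * u := by ring
  have b2 : |-((M.δ i - M.δmin) * ((θ i + 1/2) * ξ i - (ω i + 1/2) * w i))|
      ≤ (M.δ i - M.δmin) * ((R + 2) * u) := by
    rw [abs_neg, abs_mul, abs_of_nonneg (sub_nonneg.2 (M.δ_ge i))]
    exact mul_le_mul_of_nonneg_left hca (sub_nonneg.2 (M.δ_ge i))
  have h1ξ : |1 - ξ i| ≤ 1 + R := by rw [abs_le]; constructor <;> linarith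
  have hSdiff : |∑ j, (M.B i j - (θ i + 1/2) * (M.B i j - M.βmin * M.Atil i j)) * (ξ j - w j)|
      ≤ (∑ j, (M.B i j + (R + 1) * (M.B i j - M.βmin * M.Atil i j))) * u := by
    calc |∑ j, (M.B i j - (θ i + 1/2) * (M.B i j - M.βmin * M.Atil i j)) * (ξ j - w j)|
        ≤ ∑ j, |(M.B i j - (θ i + 1/2) * (M.B i j - M.βmin * M.Atil i j)) * (ξ j - w j)| :=
          Finset.abs_sum_le_sum_abs _ _
      _ ≤ ∑ j, (M.B i j + (R + 1) * (M.B i j - M.βmin * M.Atil i j)) * u := by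
          apply Finset.sum_le_sum
          intro j _
          rw [abs_mul]
          apply mul_le_mul _ (hpx j) (abs_nonneg _) _
          · have h2 : |M.B i j - (θ i + 1/2) * (M.B i j - M.βmin * M.Atil i j)|
                ≤ |M.B i j| + |(θ i + 1/2) * (M.B i j - M.βmin * M.Atil i j)| :=
              abs_sub _ _
            rw [abs_mul, abs_of_nonneg (M.B_nonneg i j), abs_of_nonneg (hE0 j)] at h2
            nlinarith [mul_le_mul_of_nonneg_right hcR (hE0 j)]
          · nlinarith [M.B_nonneg i j, hE0 j]
      _ = (∑ j, (M.B i j + (R + 1) * (M.B i j - M.βmin * M.Atil i j))) * u := by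
          rw [Finset.sum_mul]
  have b3 : |(1 - ξ i) *
        (∑ j, (M.B i j - (θ i + 1/2) * (M.B i j - M.βmin * M.Atil i j)) * (ξ j - w j))|
      ≤ (1 + R) * ((∑ j, (M.B i j + (R + 1) * (M.B i j - M.βmin * M.Atil i j))) * u) := by
    rw [abs_mul]
    exact mul_le_mul h1ξ hSdiff (abs_nonneg _) (by linarith)
  have hSE : |∑ j, (M.B i j - M.βmin * M.Atil i j) * w j|
      ≤ ∑ j, (M.B i j - M.βmin * M.Atil i j) := by
    calc |∑ j, (M.B i j - M.βmin * M.Atil i j) * w j|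
        ≤ ∑ j, |(M.B i j - M.βmin * M.Atil i j) * w j| := Finset.abs_sum_le_sum_abs _ _
      _ ≤ ∑ j, (M.B i j - M.βmin * M.Atil i j) := by
          apply Finset.sum_le_sum
          intro j _
          rw [abs_mul, abs_of_nonneg (hE0 j)]
          nlinarith [hwa j, hE0 j, abs_nonneg (w j)]
  have b4 : |-((1 - ξ i) * ((θ i - ω i) * ∑ j, (M.B i j - M.βmin * M.Atil i j) * w j))|
      ≤ (1 + R) * (u * ∑ j, (M.B i j - M.βmin * M.Atil i j)) := by
    rw [abs_neg, abs_mul, abs_mul]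
    apply mul_le_mul h1ξ _ (mul_nonneg (abs_nonneg _) (abs_nonneg _)) (by linarith)
    exact mul_le_mul (hpo i) hSE (abs_nonneg _) hu0
  have hS2 : |∑ j, (M.B i j - (ω i + 1/2) * (M.B i j - M.βmin * M.Atil i j)) * w j|
      ≤ ∑ j, (M.B i j + (M.B i j - M.βmin * M.Atil i j)) := by
    calc |∑ j, (M.B i j - (ω i + 1/2) * (M.B i j - M.βmin * M.Atil i j)) * w j|
        ≤ ∑ j, |(M.B i j - (ω i + 1/2) * (M.B i j - M.βmin * M.Atil i j)) * w j| :=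
          Finset.abs_sum_le_sum_abs _ _
      _ ≤ ∑ j, (M.B i j + (M.B i j - M.βmin * M.Atil i j)) := by
          apply Finset.sum_le_sum
          intro j _
          rw [abs_mul]
          have h2 : |M.B i j - (ω i + 1/2) * (M.B i j - M.βmin * M.Atil i j)|
              ≤ M.B i j + (M.B i j - M.βmin * M.Atil i j) := by
            rw [abs_le]
            constructor <;> nlinarith [M.B_nonneg i j, hE0 j,
              mul_le_mul_of_nonneg_right hc'1 (hE0 j), mul_nonneg hc'0 (hE0 j)]
          calc |M.B i j - (ω i + 1/2) * (M.B i j - M.βmin * M.Atil i j)| * |w j|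
              ≤ (M.B i j + (M.B i j - M.βmin * M.Atil i j)) * 1 :=
                mul_le_mul h2 (hwa j) (abs_nonneg _)
                  (by nlinarith [M.B_nonneg i j, hE0 j])
            _ = M.B i j + (M.B i j - M.βmin * M.Atil i j) := mul_one _
  have b5 : |(w i - ξ i) *
        (∑ j, (M.B i j - (ω i + 1/2) * (M.B i j - M.βmin * M.Atil i j)) * w j)|
      ≤ u * ∑ j, (M.B i j + (M.B i j - M.βmin * M.Atil i j)) := by
    rw [abs_mul, abs_sub_comm]
    exact mul_le_mul (hpx i) hS2 (abs_nonneg _) hu0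
  rw [hid]
  have htri := abs_add₅
    (-(M.δmin * (ξ i - w i)))
    (-((M.δ i - M.δmin) * ((θ i + 1/2) * ξ i - (ω i + 1/2) * w i)))
    ((1 - ξ i) * (∑ j, (M.B i j - (θ i + 1/2) * (M.B i j - M.βmin * M.Atil i j)) * (ξ j - w j)))
    (-((1 - ξ i) * ((θ i - ω i) * ∑ j, (M.B i j - M.βmin * M.Atil i j) * w j)))
    ((w i - ξ i) * (∑ j, (M.B i j - (ω i + 1/2) * (M.B i j - M.βmin * M.Atil i j)) * w j))
  apply le_trans htri
  have hfin : KxAux M R i * u = M.δmin * u + (M.δ i - M.δmin) * ((R + 2) * u)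
      + (1 + R) * ((∑ j, (M.B i j + (R + 1) * (M.B i j - M.βmin * M.Atil i j))) * u)
      + (1 + R) * (u * ∑ j, (M.B i j - M.βmin * M.Atil i j))
      + u * ∑ j, (M.B i j + (M.B i j - M.βmin * M.Atil i j)) := by
    unfold KxAux; ring
  rw [hfin]
  linarith [b1, b2, b3, b4, b5]

end EpiOpModel

/-- Lemma 5, positive invariance of the state space:
if at some time `t` one has `x_i(t) ∈ [0,1]` and `o_i(t) ∈ [−0.5, 0.5]` for all
`i`, then `x_i(t+τ) ∈ [0,1]` and `o_i(t+τ) ∈ [−0.5, 0.5]` for all `i` and all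
`τ ≥ 0`. -/
theorem positive_invariance {n : ℕ} (M : EpiOpModel n) (x o : ℝ → Fin n → ℝ)
    (htraj : M.IsTrajectory x o) (t : ℝ) (hbox : M.InBox (x t) (o t)) :
    ∀ τ : ℝ, 0 ≤ τ → M.InBox (x (t + τ)) (o (t + τ)) := by
  intro τ hτ
  have htab : t ≤ t + τ := by linarith
  -- continuity of the trajectory
  have hcx : ∀ i, Continuous fun s => x s i := fun i =>
    continuous_iff_continuousAt.2 fun s => (htraj s i).1.continuousAt
  have hco : ∀ i, Continuous fun s => o s i := fun i =>
    continuous_iff_continuousAt.2 fun s => (htraj s i).2.continuousAt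
  -- uniform bound on the trajectory over the compact time interval
  obtain ⟨R, hR0, hRx, hRo⟩ : ∃ R : ℝ, 0 ≤ R ∧
      (∀ s ∈ Set.Icc t (t + τ), ∀ i, |x s i| ≤ R) ∧
      (∀ s ∈ Set.Icc t (t + τ), ∀ i, |o s i| ≤ R) := by
    have hg : ContinuousOn (fun s => (∑ i, |x s i|) + ∑ i, |o s i|) (Set.Icc t (t + τ)) :=
      Continuous.continuousOn ((continuous_finset_sum _ fun i _ => (hcx i).abs).add
        (continuous_finset_sum _ fun i _ => (hco i).abs))
    obtain ⟨R, hR⟩ := (isCompact_Icc).exists_bound_of_continuousOn hg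
    refine ⟨max R 0, le_max_right _ _, ?_, ?_⟩
    · intro s hs i
      have h1 := hR s hs
      rw [Real.norm_eq_abs] at h1
      have h2 : (∑ i, |x s i|) + ∑ i, |o s i| ≤ abs ((∑ i, |x s i|) + ∑ i, |o s i|) :=
        le_abs_self _
      have h3 : |x s i| ≤ ∑ j, |x s j| :=
        Finset.single_le_sum (f := fun j => |x s j|) (fun j _ => abs_nonneg _)
          (Finset.mem_univ i)
      have h4 : (0:ℝ) ≤ ∑ i, |o s i| := Finset.sum_nonneg fun i _ => abs_nonneg _
      have h5 := le_max_left R (0:ℝ)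
      linarith
    · intro s hs i
      have h1 := hR s hs
      rw [Real.norm_eq_abs] at h1
      have h2 : (∑ i, |x s i|) + ∑ i, |o s i| ≤ abs ((∑ i, |x s i|) + ∑ i, |o s i|) :=
        le_abs_self _
      have h3 : |o s i| ≤ ∑ j, |o s j| :=
        Finset.single_le_sum (f := fun j => |o s j|) (fun j _ => abs_nonneg _)
          (Finset.mem_univ i)
      have h4 : (0:ℝ) ≤ ∑ i, |x s i| := Finset.sum_nonneg fun i _ => abs_nonneg _
      have h5 := le_max_left R (0:ℝ)
      linarith
  -- basic positivity facts and row bounds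
  have hδpos : ∀ i, 0 < M.δ i := fun i => lt_of_lt_of_le M.δmin_pos (M.δ_ge i)
  have hδsum : (0:ℝ) ≤ ∑ i, M.δ i := Finset.sum_nonneg fun i _ => (hδpos i).le
  have hBsum : (0:ℝ) ≤ ∑ i, ∑ j, M.B i j :=
    Finset.sum_nonneg fun i _ => Finset.sum_nonneg fun j _ => M.B_nonneg i j
  have hAusum : (0:ℝ) ≤ ∑ i, ∑ j, M.Au i j :=
    Finset.sum_nonneg fun i _ => Finset.sum_nonneg fun j _ => M.Au_nonneg i j
  set C : ℝ := 1 + (∑ i, M.δ i) + (∑ i, ∑ j, M.B i j) + (∑ i, ∑ j, M.Au i j) with hC_def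
  have hC : 0 < C := by rw [hC_def]; linarith
  have hδle : ∀ i, M.δ i ≤ C := by
    intro i
    have h1 : M.δ i ≤ ∑ j, M.δ j :=
      Finset.single_le_sum (fun j _ => (hδpos j).le) (Finset.mem_univ i)
    rw [hC_def]; linarith
  have hBrow : ∀ i, (∑ j, M.B i j) ≤ C := by
    intro i
    have h1 : (∑ j, M.B i j) ≤ ∑ k, ∑ j, M.B k j :=
      Finset.single_le_sum (f := fun k => ∑ j, M.B k j)
        (fun k _ => Finset.sum_nonneg fun j _ => M.B_nonneg k j) (Finset.mem_univ i)
    rw [hC_def]; linarith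
  have hAurow : ∀ i, 1 + (∑ j, M.Au i j) ≤ C := by
    intro i
    have h1 : (∑ j, M.Au i j) ≤ ∑ k, ∑ j, M.Au k j :=
      Finset.single_le_sum (f := fun k => ∑ j, M.Au k j)
        (fun k _ => Finset.sum_nonneg fun j _ => M.Au_nonneg k j) (Finset.mem_univ i)
    rw [hC_def]; linarith
  -- nonnegativity of the Lipschitz constant
  have hE0 : ∀ i j, (0:ℝ) ≤ M.B i j - M.βmin * M.Atil i j := fun i j =>
    sub_nonneg.2 (M.Bmin_le i j)
  have hKx0 : ∀ i, 0 ≤ KxAux M R i := by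
    intro i
    unfold KxAux
    have h1 : (0:ℝ) ≤ ∑ j, (M.B i j + (R + 1) * (M.B i j - M.βmin * M.Atil i j)) :=
      Finset.sum_nonneg fun j _ => by nlinarith [M.B_nonneg i j, hE0 i j]
    have h2 : (0:ℝ) ≤ ∑ j, (M.B i j - M.βmin * M.Atil i j) :=
      Finset.sum_nonneg fun j _ => hE0 i j
    have h3 : (0:ℝ) ≤ ∑ j, (M.B i j + (M.B i j - M.βmin * M.Atil i j)) :=
      Finset.sum_nonneg fun j _ => by nlinarith [M.B_nonneg i j, hE0 i j]
    nlinarith [M.δmin_pos.le, sub_nonneg.2 (M.δ_ge i)]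
  have hKo0 : ∀ i, 0 ≤ KoAux M i := by
    intro i
    unfold KoAux
    have h1 : (0:ℝ) ≤ ∑ j, (|M.Lu i j| + 1) :=
      Finset.sum_nonneg fun j _ => by positivity
    linarith
  have hL0 : 0 ≤ LAux M R := by
    unfold LAux
    have h1 := Finset.sum_nonneg (fun i (_ : i ∈ Finset.univ) => hKx0 i)
    have h2 := Finset.sum_nonneg (fun i (_ : i ∈ Finset.univ) => hKo0 i)
    linarith
  -- the key estimate for the abstract box-invariance lemma
  have key : ∀ s ∈ Set.Icc t (t + τ), ∃ G : Fin n ⊕ Fin n → ℝ, ∃ C' : ℝ, 0 < C' ∧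
      (∀ i, -(C' * (PosInvAux.clampf (Sum.elim (fun _ => (0:ℝ)) (fun _ => -(1/2)) i)
              (Sum.elim (fun _ => (1:ℝ)) (fun _ => 1/2) i) (Sum.elim (x s) (o s) i)
            - Sum.elim (fun _ => (0:ℝ)) (fun _ => -(1/2)) i)) ≤ G i ∧
          G i ≤ C' * (Sum.elim (fun _ => (1:ℝ)) (fun _ => 1/2) i -
            PosInvAux.clampf (Sum.elim (fun _ => (0:ℝ)) (fun _ => -(1/2)) i)
              (Sum.elim (fun _ => (1:ℝ)) (fun _ => 1/2) i) (Sum.elim (x s) (o s) i))) ∧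
      (∑ i, |Sum.elim (M.fx (x s) (o s)) (M.fo (x s) (o s)) i - G i|) ≤
        LAux M R * ∑ i, |Sum.elim (x s) (o s) i -
          PosInvAux.clampf (Sum.elim (fun _ => (0:ℝ)) (fun _ => -(1/2)) i)
            (Sum.elim (fun _ => (1:ℝ)) (fun _ => 1/2) i) (Sum.elim (x s) (o s) i)| := by
    intro s hs
    refine ⟨Sum.elim
        (M.fx (fun j => PosInvAux.clampf 0 1 (x s j))
              (fun j => PosInvAux.clampf (-(1/2)) (1/2) (o s j)))
        (M.fo (fun j => PosInvAux.clampf 0 1 (x s j))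
              (fun j => PosInvAux.clampf (-(1/2)) (1/2) (o s j))), C, hC, ?_, ?_⟩
    · -- tangency
      have hwmem : ∀ j, PosInvAux.clampf 0 1 (x s j) ∈ Set.Icc (0:ℝ) 1 := fun j =>
        PosInvAux.clampf_mem (by norm_num) _
      have hωmem : ∀ j, PosInvAux.clampf (-(1/2)) (1/2) (o s j) ∈
          Set.Icc (-(1/2):ℝ) (1/2) := fun j => PosInvAux.clampf_mem (by norm_num) _
      rintro (i | i) <;> simp only [Sum.elim_inl, Sum.elim_inr]
      · exact M.tangx i _ _ hwmem hωmem C (hδle i) (hBrow i)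
      · exact M.tango i _ _ hwmem hωmem C (hAurow i)
    · -- Lipschitz estimate
      have hwmem : ∀ j, PosInvAux.clampf 0 1 (x s j) ∈ Set.Icc (0:ℝ) 1 := fun j =>
        PosInvAux.clampf_mem (by norm_num) _
      have hωmem : ∀ j, PosInvAux.clampf (-(1/2)) (1/2) (o s j) ∈
          Set.Icc (-(1/2):ℝ) (1/2) := fun j => PosInvAux.clampf_mem (by norm_num) _
      have hsgn : ∀ j, sgnm (PosInvAux.clampf (-(1/2)) (1/2) (o s j)) = sgnm (o s j) :=
        fun j => sgnm_clampf _
      rw [Fintype.sum_sum_type, Fintype.sum_sum_type]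
      simp only [Sum.elim_inl, Sum.elim_inr]
      set u : ℝ := (∑ j, |x s j - PosInvAux.clampf 0 1 (x s j)|)
        + ∑ j, |o s j - PosInvAux.clampf (-(1/2)) (1/2) (o s j)| with hu_def
      have hsx0 : (0:ℝ) ≤ ∑ j, |x s j - PosInvAux.clampf 0 1 (x s j)| :=
        Finset.sum_nonneg fun j _ => abs_nonneg _
      have hso0 : (0:ℝ) ≤ ∑ j, |o s j - PosInvAux.clampf (-(1/2)) (1/2) (o s j)| :=
        Finset.sum_nonneg fun j _ => abs_nonneg _
      have hu0 : 0 ≤ u := by rw [hu_def]; linarith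
      have hpx : ∀ j, |x s j - PosInvAux.clampf 0 1 (x s j)| ≤ u := by
        intro j
        have h1 : |x s j - PosInvAux.clampf 0 1 (x s j)| ≤
            ∑ k, |x s k - PosInvAux.clampf 0 1 (x s k)| :=
          Finset.single_le_sum (f := fun k => |x s k - PosInvAux.clampf 0 1 (x s k)|)
            (fun k _ => abs_nonneg _) (Finset.mem_univ j)
        rw [hu_def]; linarith
      have hpo : ∀ j, |o s j - PosInvAux.clampf (-(1/2)) (1/2) (o s j)| ≤ u := by
        intro j
        have h1 : |o s j - PosInvAux.clampf (-(1/2)) (1/2) (o s j)| ≤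
            ∑ k, |o s k - PosInvAux.clampf (-(1/2)) (1/2) (o s k)| :=
          Finset.single_le_sum
            (f := fun k => |o s k - PosInvAux.clampf (-(1/2)) (1/2) (o s k)|)
            (fun k _ => abs_nonneg _) (Finset.mem_univ j)
        rw [hu_def]; linarith
      have hx1 : (∑ i, |M.fx (x s) (o s) i -
            M.fx (fun j => PosInvAux.clampf 0 1 (x s j))
              (fun j => PosInvAux.clampf (-(1/2)) (1/2) (o s j)) i|)
          ≤ ∑ i, KxAux M R i * u :=
        Finset.sum_le_sum fun i _ => M.lipx i _ _ _ _ R u hR0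
          (hRx s hs) (hRo s hs) hwmem hωmem hu0 hpx hpo
      have ho1 : (∑ i, |M.fo (x s) (o s) i -
            M.fo (fun j => PosInvAux.clampf 0 1 (x s j))
              (fun j => PosInvAux.clampf (-(1/2)) (1/2) (o s j)) i|)
          ≤ ∑ i, KoAux M i * u :=
        Finset.sum_le_sum fun i _ => M.lipo i _ _ _ _ u hu0 hpx hpo hsgn
      have hsum : (∑ i, KxAux M R i * u) + (∑ i, KoAux M i * u) = LAux M R * u := by
        rw [← Finset.sum_mul, ← Finset.sum_mul]
        unfold LAux
        ring
      calc (∑ i, |M.fx (x s) (o s) i -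
            M.fx (fun j => PosInvAux.clampf 0 1 (x s j))
              (fun j => PosInvAux.clampf (-(1/2)) (1/2) (o s j)) i|)
          + ∑ i, |M.fo (x s) (o s) i -
            M.fo (fun j => PosInvAux.clampf 0 1 (x s j))
              (fun j => PosInvAux.clampf (-(1/2)) (1/2) (o s j)) i|
          ≤ (∑ i, KxAux M R i * u) + ∑ i, KoAux M i * u := add_le_add hx1 ho1
        _ = LAux M R * u := hsum
  -- apply the abstract box-invariance lemma
  have main := PosInvAux.box_invariance
    (fun s => Sum.elim (x s) (o s))
    (fun s => Sum.elim (M.fx (x s) (o s)) (M.fo (x s) (o s)))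
    (Sum.elim (fun _ => (0:ℝ)) (fun _ => -(1/2)))
    (Sum.elim (fun _ => (1:ℝ)) (fun _ => 1/2))
    (by rintro (i | i) <;> norm_num)
    (by
      intro s i
      rcases i with i | i
      · simpa using (htraj s i).1
      · simpa using (htraj s i).2)
    t (t + τ) (LAux M R) hL0 key
    (by
      rintro (i | i)
      · exact hbox.1 i
      · exact hbox.2 i)
  have hmem := main (t + τ) ⟨htab, le_rfl⟩
  exact ⟨fun i => hmem (Sum.inl i), fun i => hmem (Sum.inr i)⟩
end
end

section
/- Mild virus case: if R_max = ρ(D_min^{−1} B) ≤ 1, then every equilibrium (x*, o*) of the coupled epidemic–opinion model is a healthy state, i.e., x* = 0; equivalently, no endemic equilibrium with x* ≥ 0, x* ≠ 0 exists. -/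
open Matrix Filter Set

noncomputable section

open scoped ENNReal NNReal Topology

section Aux

attribute [local instance] Matrix.linftyOpNormedAddCommGroup Matrix.linftyOpNormedRing
  Matrix.linftyOpNormedAlgebra

lemma aux_not_specRad_le_one {n : ℕ} (A : Matrix (Fin n) (Fin n) ℝ) (hA : ∀ i j, 0 ≤ A i j)
    (x : Fin n → ℝ) (i₀ : Fin n) (hx : ∀ i, 0 ≤ x i) (hx0 : 0 < x i₀)
    (r : ℝ) (hr : 1 < r) (hAx : ∀ i, r * x i ≤ (A *ᵥ x) i)
    (hS : specRad A ≤ 1) : False := by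
  have hne : Nonempty (Fin n) := ⟨i₀⟩
  haveI : CompleteSpace (Matrix (Fin n) (Fin n) ℂ) := FiniteDimensional.complete ℂ _
  set A' : Matrix (Fin n) (Fin n) ℂ := A.map (algebraMap ℝ ℂ) with hA'
  have hr0 : (0:ℝ) < r := lt_trans one_pos hr
  -- spectral radius bound
  have hbdd : BddAbove ((fun z : ℂ => ‖z‖) '' spectrum ℂ A') := by
    refine ⟨‖A'‖, ?_⟩
    rintro - ⟨z, hz, rfl⟩
    simpa using spectrum.norm_le_norm_of_mem hz
  have hz1 : ∀ z ∈ spectrum ℂ A', ‖z‖ ≤ 1 := by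
    intro z hz
    have := le_csSup hbdd (mem_image_of_mem _ hz)
    exact this.trans hS
  have hρ : spectralRadius ℂ A' ≤ 1 := by
    rw [spectralRadius]
    refine iSup₂_le fun z hz => ?_
    have := hz1 z hz
    exact_mod_cast this
  have T := spectrum.pow_norm_pow_one_div_tendsto_nhds_spectralRadius A'
  -- power lower bound
  have hpow : ∀ k : ℕ, ∀ i, r ^ k * x i ≤ ((A ^ k) *ᵥ x) i := by
    intro k
    induction k with
    | zero => intro i; simp [Matrix.one_mulVec]
    | succ k ih =>
      intro i
      have h1 : r ^ (k+1) * x i = r ^ k * (r * x i) := by ring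
      have h2 : r ^ k * (r * x i) ≤ r ^ k * (A *ᵥ x) i :=
        mul_le_mul_of_nonneg_left (hAx i) (pow_nonneg hr0.le k)
      have h3 : r ^ k * (A *ᵥ x) i = (A *ᵥ (r ^ k • x)) i := by
        rw [Matrix.mulVec_smul]; simp
      have h4 : (A *ᵥ (r ^ k • x)) i ≤ (A *ᵥ ((A ^ k) *ᵥ x)) i := by
        simp only [Matrix.mulVec, dotProduct]
        refine Finset.sum_le_sum fun j _ => mul_le_mul_of_nonneg_left ?_ (hA i j)
        simpa [Matrix.mulVec, dotProduct] using ih j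
      have h5 : (A *ᵥ ((A ^ k) *ᵥ x)) = ((A ^ (k+1)) *ᵥ x) := by
        rw [Matrix.mulVec_mulVec, ← pow_succ']
      rw [h1]
      calc r ^ k * (r * x i) ≤ r ^ k * (A *ᵥ x) i := h2
        _ = (A *ᵥ (r ^ k • x)) i := h3
        _ ≤ (A *ᵥ ((A ^ k) *ᵥ x)) i := h4
        _ = ((A ^ (k+1)) *ᵥ x) i := by rw [h5]
  -- norm lower bound
  have hxnorm : 0 < ‖x‖ := lt_of_lt_of_le (by simpa [Real.norm_eq_abs, abs_of_pos hx0] using hx0)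
    (norm_le_pi_norm x i₀)
  have hnorm : ∀ k : ℕ, r ^ k * x i₀ ≤ ‖A ^ k‖ * ‖x‖ := by
    intro k
    calc r ^ k * x i₀ ≤ ((A ^ k) *ᵥ x) i₀ := hpow k i₀
      _ ≤ |((A ^ k) *ᵥ x) i₀| := le_abs_self _
      _ ≤ ‖(A ^ k) *ᵥ x‖ := by simpa [Real.norm_eq_abs] using norm_le_pi_norm ((A ^ k) *ᵥ x) i₀
      _ ≤ ‖A ^ k‖ * ‖x‖ := Matrix.linfty_opNorm_mulVec _ _
  set c : ℝ := x i₀ / ‖x‖ with hc'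
  have hc : 0 < c := div_pos hx0 hxnorm
  have hAk : ∀ k : ℕ, c * r ^ k ≤ ‖A ^ k‖ := by
    intro k
    rw [hc', div_mul_eq_mul_div, div_le_iff₀ hxnorm]
    calc x i₀ * r ^ k = r ^ k * x i₀ := by ring
      _ ≤ ‖A ^ k‖ * ‖x‖ := hnorm k
  have hmapnorm : ∀ (M : Matrix (Fin n) (Fin n) ℝ), ‖M.map (algebraMap ℝ ℂ)‖ = ‖M‖ := by
    intro M
    rw [Matrix.linfty_opNorm_def, Matrix.linfty_opNorm_def]
    norm_cast
    apply Finset.sup_congr rfl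
    intro i _
    apply Finset.sum_congr rfl
    intro j _
    simp [Matrix.map_apply]
  have hpowmap : ∀ k : ℕ, A' ^ k = (A ^ k).map (algebraMap ℝ ℂ) := by
    intro k
    rw [hA', ← RingHom.mapMatrix_apply, ← RingHom.mapMatrix_apply, ← map_pow]
  set r' : ℝ := (1 + r) / 2 with hr''
  have hr'1 : 1 < r' := by rw [hr'']; linarith
  have hr'r : r' < r := by rw [hr'']; linarith
  have hcl : Tendsto (fun k : ℕ => c ^ (1/(k:ℝ))) atTop (𝓝 1) := by
    have h0 : Tendsto (fun k : ℕ => 1/(k:ℝ)) atTop (𝓝 0) := tendsto_one_div_atTop_nhds_zero_nat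
    have := (Real.continuousAt_const_rpow (ne_of_gt hc)).tendsto.comp h0
    simpa [Function.comp_def] using this
  have hlt : r' / r < 1 := by rw [div_lt_one hr0]; exact hr'r
  have hev : ∀ᶠ k : ℕ in atTop, ENNReal.ofReal r' ≤ ENNReal.ofReal (‖A' ^ k‖ ^ (1/(k:ℝ))) := by
    filter_upwards [hcl.eventually_const_lt hlt, eventually_ge_atTop 1] with k h1 h2
    apply ENNReal.ofReal_le_ofReal
    have hk0 : (k:ℝ) ≠ 0 := by positivity
    have hcr : (c * r ^ k) ^ (1/(k:ℝ)) = c ^ (1/(k:ℝ)) * r := by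
      rw [Real.mul_rpow hc.le (pow_nonneg hr0.le k), ← Real.rpow_natCast r k,
        ← Real.rpow_mul hr0.le]
      rw [mul_one_div, div_self hk0, Real.rpow_one]
    have h3 : r' ≤ c ^ (1/(k:ℝ)) * r := by
      have := mul_le_mul_of_nonneg_right h1.le hr0.le
      rw [div_mul_cancel₀ _ (ne_of_gt hr0)] at this
      linarith
    calc r' ≤ c ^ (1/(k:ℝ)) * r := h3
      _ = (c * r ^ k) ^ (1/(k:ℝ)) := hcr.symm
      _ ≤ ‖A ^ k‖ ^ (1/(k:ℝ)) := by
          apply Real.rpow_le_rpow (by positivity) (hAk k) (by positivity)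
      _ = ‖A' ^ k‖ ^ (1/(k:ℝ)) := by rw [hpowmap k, hmapnorm]
  have hge : ENNReal.ofReal r' ≤ spectralRadius ℂ A' := ge_of_tendsto T hev
  have : ENNReal.ofReal r' ≤ 1 := hge.trans hρ
  rw [ENNReal.ofReal_le_one] at this
  linarith

end Aux

section MainAux

variable {n : ℕ} (M : EpiOpModel n)

lemma aux_B_nonneg : ∀ i j, 0 ≤ M.B i j := by
  intro i j
  rcases M.Atil_01 i j with h | h
  · rw [M.B_off i j h]
  · exact le_trans M.βmin_pos.le (M.B_edge i j h)

lemma aux_Bmin_le : ∀ i j, M.Bmin i j ≤ M.B i j := by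
  intro i j
  have : M.Bmin i j = M.βmin * M.Atil i j := by simp [EpiOpModel.Bmin]
  rcases M.Atil_01 i j with h | h
  · rw [this, h, mul_zero]; exact aux_B_nonneg M i j
  · rw [this, h, mul_one]; exact M.B_edge i j h

lemma aux_Bmin_nonneg : ∀ i j, 0 ≤ M.Bmin i j := by
  intro i j
  have : M.Bmin i j = M.βmin * M.Atil i j := by simp [EpiOpModel.Bmin]
  rcases M.Atil_01 i j with h | h <;> rw [this, h] <;> simp [M.βmin_pos.le]

lemma aux_Bpow_nonneg : ∀ k : ℕ, ∀ i j, 0 ≤ (M.B ^ k) i j := by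
  intro k
  induction k with
  | zero => intro i j; rw [pow_zero, Matrix.one_apply]; split <;> norm_num
  | succ k ih =>
    intro i j
    rw [pow_succ', Matrix.mul_apply]
    exact Finset.sum_nonneg fun l _ => mul_nonneg (aux_B_nonneg M i l) (ih l j)

end MainAux

/-- Proposition 2, mild virus case: if `R_max = ρ(D_min⁻¹ B) ≤ 1`
then every equilibrium of the coupled model is a healthy state, i.e. `x* = 0`;
no endemic equilibrium exists. -/
theorem mild_virus_only_healthy_equilibria {n : ℕ} (M : EpiOpModel n)
    (hR : M.Rmax ≤ 1) (x o : Fin n → ℝ) (hbox : M.InBox x o)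
    (heq : M.IsEquilibrium x o) :
    x = 0 := by
  by_contra hx0
  obtain ⟨j₀, hj₀⟩ := Function.ne_iff.mp hx0
  have hxj₀ : 0 < x j₀ := lt_of_le_of_ne (hbox.1 j₀).1 (Ne.symm (by simpa using hj₀))
  have hx01 := hbox.1
  have ho' := hbox.2
  have ht0 : ∀ i, 0 ≤ o i + 1/2 := fun i => by have := (ho' i).1; linarith
  have ht1 : ∀ i, o i + 1/2 ≤ 1 := fun i => by have := (ho' i).2; linarith
  -- Bmat entry facts
  have hBoeq : ∀ i j, M.Bmat o i j = M.B i j - (o i + 1/2) * (M.B i j - M.Bmin i j) := by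
    intro i j; rfl
  have hBo_nonneg : ∀ i j, 0 ≤ M.Bmat o i j := by
    intro i j
    rw [hBoeq]
    nlinarith [aux_Bmin_le M i j, aux_Bmin_nonneg M i j, aux_B_nonneg M i j, ht0 i, ht1 i,
      mul_nonneg (ht0 i) (sub_nonneg.mpr (aux_Bmin_le M i j))]
  have hBo_le : ∀ i j, M.Bmat o i j ≤ M.B i j := by
    intro i j
    rw [hBoeq]
    nlinarith [mul_nonneg (ht0 i) (sub_nonneg.mpr (aux_Bmin_le M i j))]
  have hBo_pos : ∀ i j, 0 < M.B i j → 0 < M.Bmat o i j := by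
    intro i j hB
    have hA1 : M.Atil i j = 1 := by
      rcases M.Atil_01 i j with h | h
      · exact absurd (M.B_off i j h) (ne_of_gt hB)
      · exact h
    have hBmin : M.Bmin i j = M.βmin := by simp [EpiOpModel.Bmin, hA1]
    have hedge : M.βmin ≤ M.B i j := M.B_edge i j hA1
    rw [hBoeq, hBmin]
    have := mul_le_mul_of_nonneg_right (ht1 i) (sub_nonneg.mpr hedge)
    nlinarith [M.βmin_pos]
  -- the equilibrium equation, componentwise
  have key : ∀ i, (M.δmin + (M.δ i - M.δmin) * (o i + 1/2)) * x i
      = (1 - x i) * ((M.Bmat o) *ᵥ x) i := by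
    intro i
    have h := congrFun heq.1 i
    simp only [EpiOpModel.fx, Pi.add_apply, Pi.neg_apply, Pi.zero_apply, EpiOpModel.Dmat,
      Matrix.mulVec_diagonal] at h
    linarith
  have hDge : ∀ i, M.δmin ≤ M.δmin + (M.δ i - M.δmin) * (o i + 1/2) := by
    intro i
    nlinarith [mul_nonneg (sub_nonneg.mpr (M.δ_ge i)) (ht0 i)]
  have hDpos : ∀ i, 0 < M.δmin + (M.δ i - M.δmin) * (o i + 1/2) :=
    fun i => lt_of_lt_of_le M.δmin_pos (hDge i)
  have hs_nonneg : ∀ i, 0 ≤ ((M.Bmat o) *ᵥ x) i := by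
    intro i
    show (0:ℝ) ≤ ∑ j, M.Bmat o i j * x j
    exact Finset.sum_nonneg fun j _ => mul_nonneg (hBo_nonneg i j) (hx01 j).1
  -- zero propagation
  have hzero : ∀ i, x i = 0 → ∀ j, 0 < M.B i j → x j = 0 := by
    intro i hxi j hBij
    have h := key i
    rw [hxi] at h
    simp only [mul_zero, sub_zero, one_mul] at h
    have hsum : ∑ l, M.Bmat o i l * x l = 0 := h.symm
    have := (Finset.sum_eq_zero_iff_of_nonneg
      (fun l _ => mul_nonneg (hBo_nonneg i l) (hx01 l).1)).mp hsum j (Finset.mem_univ j)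
    have hpos := hBo_pos i j hBij
    rcases mul_eq_zero.mp this with h' | h'
    · exact absurd h' (ne_of_gt hpos)
    · exact h'
  have hprop : ∀ k : ℕ, ∀ i j, x i = 0 → 0 < (M.B ^ k) i j → x j = 0 := by
    intro k
    induction k with
    | zero =>
      intro i j hxi hk
      rw [pow_zero, Matrix.one_apply] at hk
      by_cases h : i = j
      · rw [← h]; exact hxi
      · simp [h] at hk
    | succ k ih =>
      intro i j hxi hk
      rw [pow_succ', Matrix.mul_apply] at hk
      obtain ⟨l, -, hl⟩ := Finset.exists_lt_of_sum_lt (by simpa using hk :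
        ∑ _l : Fin n, (0:ℝ) < ∑ l, M.B i l * (M.B ^ k) l j)
      have hBl : 0 < M.B i l := by
        rcases lt_or_eq_of_le (aux_B_nonneg M i l) with h' | h'
        · exact h'
        · rw [← h', zero_mul] at hl; exact absurd hl (lt_irrefl 0)
      have hBkl : 0 < (M.B ^ k) l j := by
        rcases lt_or_eq_of_le (aux_Bpow_nonneg M k l j) with h' | h'
        · exact h'
        · rw [← h', mul_zero] at hl; exact absurd hl (lt_irrefl 0)
      exact ih l j (hzero i hxi l hBl) hBkl
  have hpos : ∀ i, 0 < x i := by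
    intro i
    rcases lt_or_eq_of_le (hx01 i).1 with h | h
    · exact h
    · obtain ⟨k, -, hk⟩ := M.B_irred i j₀
      exact absurd (hprop k i j₀ h.symm hk) (ne_of_gt hxj₀)
  -- strict subinvariance
  have hstrict : ∀ i, M.δmin * x i < (M.B *ᵥ x) i := by
    intro i
    have hk := key i
    have h1x : 0 < 1 - x i := by
      by_contra h
      push_neg at h
      have hl : 0 < (M.δmin + (M.δ i - M.δmin) * (o i + 1/2)) * x i :=
        mul_pos (hDpos i) (hpos i)
      nlinarith [hs_nonneg i]
    have hspos : 0 < ((M.Bmat o) *ᵥ x) i := by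
      by_contra h
      push_neg at h
      have hl : 0 < (M.δmin + (M.δ i - M.δmin) * (o i + 1/2)) * x i :=
        mul_pos (hDpos i) (hpos i)
      nlinarith
    have h2 : M.δmin * x i ≤ (M.δmin + (M.δ i - M.δmin) * (o i + 1/2)) * x i :=
      mul_le_mul_of_nonneg_right (hDge i) (hpos i).le
    have h3 : (1 - x i) * ((M.Bmat o) *ᵥ x) i < ((M.Bmat o) *ᵥ x) i := by
      nlinarith [hpos i]
    have h4 : ((M.Bmat o) *ᵥ x) i ≤ (M.B *ᵥ x) i :=
      show ∑ j, M.Bmat o i j * x j ≤ ∑ j, M.B i j * x j from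
      Finset.sum_le_sum fun j _ => mul_le_mul_of_nonneg_right (hBo_le i j) (hx01 j).1
    linarith
  -- pass to A = δmin⁻¹ • B
  set A : Matrix (Fin n) (Fin n) ℝ := M.δmin⁻¹ • M.B with hA
  have hAentries : ∀ i j, 0 ≤ A i j := by
    intro i j
    rw [hA, Matrix.smul_apply, smul_eq_mul]
    exact mul_nonneg (inv_nonneg.mpr M.δmin_pos.le) (aux_B_nonneg M i j)
  have hAxv : ∀ i, (A *ᵥ x) i = M.δmin⁻¹ * (M.B *ᵥ x) i := by
    intro i
    rw [hA, Matrix.smul_mulVec, Pi.smul_apply, smul_eq_mul]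
  have hAx' : ∀ i, x i < (A *ᵥ x) i := by
    intro i
    rw [hAxv i, inv_mul_eq_div, lt_div_iff₀ M.δmin_pos]
    calc x i * M.δmin = M.δmin * x i := by ring
      _ < (M.B *ᵥ x) i := hstrict i
  have hne : Nonempty (Fin n) := ⟨j₀⟩
  set r : ℝ := Finset.univ.inf' Finset.univ_nonempty (fun i => (A *ᵥ x) i / x i) with hrdef
  have hr : 1 < r := by
    rw [hrdef, Finset.lt_inf'_iff]
    intro i _
    exact (one_lt_div (hpos i)).mpr (hAx' i)
  have hAxr : ∀ i, r * x i ≤ (A *ᵥ x) i := by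
    intro i
    have h1 : r ≤ (A *ᵥ x) i / x i := Finset.inf'_le _ (Finset.mem_univ i)
    calc r * x i ≤ ((A *ᵥ x) i / x i) * x i := mul_le_mul_of_nonneg_right h1 (hpos i).le
      _ = (A *ᵥ x) i := div_mul_cancel₀ _ (ne_of_gt (hpos i))
  have hDinv : M.Dmin⁻¹ * M.B = A := by
    have h1 : (M.Dmin)⁻¹ = M.δmin⁻¹ • (1 : Matrix (Fin n) (Fin n) ℝ) := by
      apply Matrix.inv_eq_right_inv
      rw [EpiOpModel.Dmin, smul_mul_smul_comm, one_mul,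
        mul_inv_cancel₀ (ne_of_gt M.δmin_pos), one_smul]
    rw [h1, smul_mul_assoc, one_mul]
  exact aux_not_specRad_le_one A hAentries x j₀ (fun i => (hpos i).le) (hpos j₀) r hr hAxr
    (by rw [← hDinv]; exact hR)
end
end

section
/- Existence of a threshold opinion vector: if R_min = ρ(D^{−1} B_min) < 1 and R_max = ρ(D_min^{−1} B) > 1, then there exists at least one opinion vector ō ∈ [−0.5, 0.5]^n such that R^{ō} = ρ(D(ō)^{−1} B(ō)) = 1. -/
open Matrix Filter Set

noncomputable section

namespace SpecRadAux
open Topology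
attribute [local instance] Matrix.linftyOpNormedRing Matrix.linftyOpNormedAlgebra
variable {m : Type*} [Fintype m] [DecidableEq m]




lemma bddAbove_abs_spectrum (A : Matrix m m ℝ) :
    BddAbove ((fun z : ℂ => ‖z‖) '' spectrum ℂ (A.map (algebraMap ℝ ℂ))) := by
  cases isEmpty_or_nonempty m
  · refine ⟨0, ?_⟩
    rintro x ⟨z, hz, rfl⟩
    exfalso
    have : IsUnit ((algebraMap ℂ (Matrix m m ℂ)) z - A.map (algebraMap ℝ ℂ)) :=
      isUnit_of_subsingleton _
    exact hz this
  · refine ⟨‖A.map (algebraMap ℝ ℂ)‖, ?_⟩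
    rintro x ⟨z, hz, rfl⟩
    exact spectrum.norm_le_norm_of_mem hz

lemma abs_le_specRad (A : Matrix m m ℝ) {z : ℂ}
    (hz : z ∈ spectrum ℂ (A.map (algebraMap ℝ ℂ))) : ‖z‖ ≤ specRad A :=
  le_csSup (bddAbove_abs_spectrum A) ⟨z, hz, rfl⟩

lemma specRad_nonneg [Nonempty m] (A : Matrix m m ℝ) : 0 ≤ specRad A := by
  obtain ⟨z, hz⟩ := spectrum.nonempty (A.map (algebraMap ℝ ℂ))
  exact le_trans (norm_nonneg z) (abs_le_specRad A hz)



lemma pow_entry_nonneg {A : Matrix m m ℝ} (hA : ∀ i j, 0 ≤ A i j) (k : ℕ) :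
    ∀ i j, 0 ≤ (A ^ k) i j := by
  induction k with
  | zero => intro i j; rw [pow_zero]; by_cases h : i = j <;> simp [Matrix.one_apply, h]
  | succ k ih =>
    intro i j
    rw [pow_succ, Matrix.mul_apply]
    exact Finset.sum_nonneg fun l _ => mul_nonneg (ih i l) (hA l j)

lemma pow_entry_le {A B : Matrix m m ℝ} {c : ℝ}
    (hA : ∀ i j, 0 ≤ A i j) (hB : ∀ i j, 0 ≤ B i j) (hc : 0 ≤ c)
    (hAB : ∀ i j, A i j ≤ c * B i j) (k : ℕ) :
    ∀ i j, (A ^ k) i j ≤ c ^ k * (B ^ k) i j := by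
  induction k with
  | zero => intro i j; simp
  | succ k ih =>
    intro i j
    rw [pow_succ A k, pow_succ B k, Matrix.mul_apply, Matrix.mul_apply, Finset.mul_sum]
    refine Finset.sum_le_sum fun l _ => ?_
    calc (A ^ k) i l * A l j ≤ (c ^ k * (B ^ k) i l) * (c * B l j) := by
          apply mul_le_mul (ih i l) (hAB l j) (hA l j)
          exact mul_nonneg (pow_nonneg hc k) (pow_entry_nonneg hB k i l)
      _ = c ^ (k + 1) * ((B ^ k) i l * B l j) := by ring


lemma nnnorm_map_le {M N : Matrix m m ℝ} {d : NNReal}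
    (h : ∀ i j, ‖M i j‖₊ ≤ d * ‖N i j‖₊) :
    ‖M.map (algebraMap ℝ ℂ)‖₊ ≤ d * ‖N.map (algebraMap ℝ ℂ)‖₊ := by
  rw [Matrix.linfty_opNNNorm_def, Matrix.linfty_opNNNorm_def]
  refine Finset.sup_le fun i _ => ?_
  calc (∑ j, ‖(M.map (algebraMap ℝ ℂ)) i j‖₊)
      ≤ ∑ j, d * ‖(N.map (algebraMap ℝ ℂ)) i j‖₊ := by
        refine Finset.sum_le_sum fun j _ => ?_
        simpa [Matrix.map_apply, Complex.nnnorm_real] using h i j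
    _ = d * ∑ j, ‖(N.map (algebraMap ℝ ℂ)) i j‖₊ := by rw [Finset.mul_sum]
    _ ≤ d * Finset.univ.sup fun i => ∑ j, ‖(N.map (algebraMap ℝ ℂ)) i j‖₊ := by
        exact mul_le_mul_right (Finset.le_sup (f := fun i => ∑ j, ‖(N.map (algebraMap ℝ ℂ)) i j‖₊) (Finset.mem_univ i)) d

lemma norm_map_le {M N : Matrix m m ℝ} {d : ℝ} (hd : 0 ≤ d)
    (h : ∀ i j, |M i j| ≤ d * |N i j|) :
    ‖M.map (algebraMap ℝ ℂ)‖ ≤ d * ‖N.map (algebraMap ℝ ℂ)‖ := by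
  have := nnnorm_map_le (M := M) (N := N) (d := d.toNNReal) ?_
  · have := NNReal.coe_le_coe.mpr this
    push_cast at this
    rwa [Real.coe_toNNReal _ hd] at this
  · intro i j
    rw [← NNReal.coe_le_coe]
    push_cast
    rw [Real.coe_toNNReal _ hd]
    simpa [Real.norm_eq_abs] using h i j

lemma specRad_le_mul [Nonempty m] {A B : Matrix m m ℝ} {c : ℝ}
    (hA : ∀ i j, 0 ≤ A i j) (hB : ∀ i j, 0 ≤ B i j) (hc : 0 ≤ c)
    (hAB : ∀ i j, A i j ≤ c * B i j) : specRad A ≤ c * specRad B := by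
  set A' := A.map (algebraMap ℝ ℂ) with hA'
  set B' := B.map (algebraMap ℝ ℂ) with hB'
  have hfin : spectralRadius ℂ B' ≠ ⊤ :=
    (lt_of_le_of_lt (spectrum.spectralRadius_le_nnnorm B') ENNReal.coe_lt_top).ne
  set L := (spectralRadius ℂ B').toReal with hLdef
  have hgel : Tendsto (fun k : ℕ => ‖B' ^ k‖ ^ (1/(k:ℝ))) atTop (𝓝 L) := by
    have h1 := spectrum.pow_nnnorm_pow_one_div_tendsto_nhds_spectralRadius B'
    have h2 := (ENNReal.tendsto_toReal hfin).comp h1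
    convert h2 using 2 with k
    simp only [Function.comp_apply]
    rw [← ENNReal.toReal_rpow, ENNReal.coe_toReal, coe_nnnorm]
  have hL : L ≤ specRad B := by
    have hsr : spectralRadius ℂ B' ≤ ENNReal.ofReal (specRad B) := by
      rw [spectralRadius]
      refine iSup₂_le fun z hz => ?_
      rw [show ((‖z‖₊ : NNReal) : ENNReal) = ENNReal.ofReal ‖z‖ from (ofReal_norm z).symm]
      exact ENNReal.ofReal_le_ofReal
        (by simpa using abs_le_specRad B hz)
    calc L ≤ (ENNReal.ofReal (specRad B)).toReal :=
          ENNReal.toReal_mono ENNReal.ofReal_ne_top hsr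
      _ = specRad B := ENNReal.toReal_ofReal (specRad_nonneg B)
  refine Real.sSup_le ?_ (mul_nonneg hc (specRad_nonneg B))
  rintro x ⟨z, hz, rfl⟩
  have key : ∀ k : ℕ, 1 ≤ k → ‖z‖ ≤ c * ‖B' ^ k‖ ^ (1/(k:ℝ)) := by
    intro k hk
    have hknz : (k:ℝ) ≠ 0 := Nat.cast_ne_zero.mpr (by omega)
    have hzk : z ^ k ∈ spectrum ℂ (A' ^ k) := by
      rw [spectrum.map_pow_of_pos A' (by omega : 0 < k)]
      exact ⟨z, hz, rfl⟩
    have h1 : ‖z‖ ^ k ≤ ‖A' ^ k‖ := by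
      have := spectrum.norm_le_norm_of_mem hzk
      simpa [norm_pow] using this
    have hmapA : A' ^ k = (A ^ k).map (algebraMap ℝ ℂ) := by
      simpa [hA', RingHom.mapMatrix_apply] using (map_pow ((algebraMap ℝ ℂ).mapMatrix) A k).symm
    have hmapB : B' ^ k = (B ^ k).map (algebraMap ℝ ℂ) := by
      simpa [hB', RingHom.mapMatrix_apply] using (map_pow ((algebraMap ℝ ℂ).mapMatrix) B k).symm
    have h2 : ‖A' ^ k‖ ≤ c ^ k * ‖B' ^ k‖ := by
      rw [hmapA, hmapB]
      refine norm_map_le (pow_nonneg hc k) fun i j => ?_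
      rw [abs_of_nonneg (pow_entry_nonneg hA k i j), abs_of_nonneg (pow_entry_nonneg hB k i j)]
      exact pow_entry_le hA hB hc hAB k i j
    have habs : ‖z‖ = (‖z‖ ^ k) ^ (1/(k:ℝ)) := by
      rw [← Real.rpow_natCast (‖z‖) k, ← Real.rpow_mul (norm_nonneg z),
        mul_one_div, div_self hknz, Real.rpow_one]
    rw [habs]
    calc (‖z‖ ^ k) ^ (1/(k:ℝ)) ≤ (c ^ k * ‖B' ^ k‖) ^ (1/(k:ℝ)) :=
          Real.rpow_le_rpow (pow_nonneg (norm_nonneg z) k) (h1.trans h2) (by positivity)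
      _ = (c ^ k) ^ (1/(k:ℝ)) * ‖B' ^ k‖ ^ (1/(k:ℝ)) :=
          Real.mul_rpow (pow_nonneg hc k) (norm_nonneg _)
      _ = c * ‖B' ^ k‖ ^ (1/(k:ℝ)) := by
          rw [← Real.rpow_natCast c k, ← Real.rpow_mul hc, mul_one_div, div_self hknz,
            Real.rpow_one]
  have hten : Tendsto (fun k : ℕ => c * ‖B' ^ k‖ ^ (1/(k:ℝ))) atTop (𝓝 (c * L)) :=
    hgel.const_mul c
  have hzc : ‖z‖ ≤ c * L :=
    ge_of_tendsto hten (eventually_atTop.mpr ⟨1, fun k hk => key k hk⟩)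
  exact hzc.trans (mul_le_mul_of_nonneg_left hL hc)


end SpecRadAux
set_option maxHeartbeats 1000000 in
/-- Corollary 3, existence of a threshold opinion vector: if
`R_min < 1` and `R_max > 1`, there exists `ō ∈ [−0.5, 0.5]^n` with
`R^{ō} = 1`. -/
theorem threshold_opinion_vector_exists {n : ℕ} (M : EpiOpModel n)
    (hRmin : M.Rmin < 1) (hRmax : 1 < M.Rmax) :
    ∃ ob : Fin n → ℝ, (∀ i, ob i ∈ Set.Icc (-(1/2) : ℝ) (1/2)) ∧
      M.Rnum ob = 1 := by
  classical
  rcases Nat.eq_zero_or_pos n with hn | hn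
  · exfalso
    subst hn
    haveI : Subsingleton (Matrix (Fin 0) (Fin 0) ℂ) :=
      ⟨fun a b => by ext i j; exact i.elim0⟩
    have h0 : M.Rmax = 0 := by
      have hemp : spectrum ℂ ((M.Dmin⁻¹ * M.B).map (algebraMap ℝ ℂ)) = ∅ := by
        ext z
        simp only [Set.mem_empty_iff_false, iff_false]
        intro hz
        exact hz (isUnit_of_subsingleton _)
      rw [EpiOpModel.Rmax, specRad, hemp, Set.image_empty, Real.sSup_empty]
    rw [h0] at hRmax
    linarith
  haveI : Nonempty (Fin n) := ⟨⟨0, hn⟩⟩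
  -- abbreviations
  set d : ℝ → Fin n → ℝ := fun t i => M.δmin + (M.δ i - M.δmin) * t with hd
  set Am : ℝ → Matrix (Fin n) (Fin n) ℝ := fun t =>
    Matrix.of fun i j => (d t i)⁻¹ * (M.B i j - t * (M.B i j - M.βmin * M.Atil i j)) with hAm
  have hBnn : ∀ i j, 0 ≤ M.B i j := by
    intro i j
    rcases M.Atil_01 i j with h | h
    · rw [M.B_off i j h]
    · exact le_trans M.βmin_pos.le (M.B_edge i j h)
  have hδpos : ∀ i, 0 < M.δ i := fun i => lt_of_lt_of_le M.δmin_pos (M.δ_ge i)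
  set Sβ : ℝ := ∑ i, ∑ j, M.B i j with hSβ
  set Sδ : ℝ := ∑ i, M.δ i with hSδ
  have hSβnn : 0 ≤ Sβ :=
    Finset.sum_nonneg fun i _ => Finset.sum_nonneg fun j _ => hBnn i j
  have hSδnn : 0 ≤ Sδ := Finset.sum_nonneg fun i _ => (hδpos i).le
  have hBle : ∀ i j, M.B i j ≤ Sβ := by
    intro i j
    refine le_trans (Finset.single_le_sum (fun j _ => hBnn i j) (Finset.mem_univ j)) ?_
    exact Finset.single_le_sum (f := fun i => ∑ j, M.B i j)
      (fun i _ => Finset.sum_nonneg fun j _ => hBnn i j) (Finset.mem_univ i)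
  have hδle : ∀ i, M.δ i ≤ Sδ :=
    fun i => Finset.single_le_sum (fun i _ => (hδpos i).le) (Finset.mem_univ i)
  set K1 : ℝ := Sβ / M.βmin with hK1def
  set K2 : ℝ := Sδ / M.δmin with hK2def
  have hK1 : 0 ≤ K1 := div_nonneg hSβnn M.βmin_pos.le
  have hK2 : 0 ≤ K2 := div_nonneg hSδnn M.δmin_pos.le
  set K : ℝ := K1 + K2 + K1 * K2 with hKdef
  have hK : 0 ≤ K := by positivity
  -- facts about d
  have hdpos : ∀ t ∈ Icc (0:ℝ) 1, ∀ i, 0 < d t i := by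
    intro t ht i
    have h1 : 0 ≤ (M.δ i - M.δmin) * t :=
      mul_nonneg (sub_nonneg.mpr (M.δ_ge i)) ht.1
    have := M.δmin_pos
    simp only [hd]
    linarith
  -- nonnegativity of entries of Am t
  have hNnn : ∀ t ∈ Icc (0:ℝ) 1, ∀ i j,
      0 ≤ M.B i j - t * (M.B i j - M.βmin * M.Atil i j) := by
    intro t ht i j
    rcases M.Atil_01 i j with h | h
    · rw [M.B_off i j h, h]; ring_nf; exact le_refl 0
    · have hBe := M.B_edge i j h
      rw [h, mul_one]
      nlinarith [ht.1, ht.2, M.βmin_pos]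
  have hAnn : ∀ t ∈ Icc (0:ℝ) 1, ∀ i j, 0 ≤ Am t i j := by
    intro t ht i j
    exact mul_nonneg (inv_nonneg.mpr (hdpos t ht i).le) (hNnn t ht i j)
  -- key entrywise comparison
  have hcomp : ∀ s ∈ Icc (0:ℝ) 1, ∀ t ∈ Icc (0:ℝ) 1, ∀ i j,
      Am s i j ≤ (1 + K * |s - t|) * Am t i j := by
    intro s hs t ht i j
    set h : ℝ := |s - t| with hh
    have hh0 : 0 ≤ h := abs_nonneg _
    have hh1 : h ≤ 1 := by
      rw [hh, abs_sub_le_iff]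
      constructor <;> linarith [hs.1, hs.2, ht.1, ht.2]
    have hcnn : 0 ≤ 1 + K * h := by positivity
    rcases M.Atil_01 i j with hat | hat
    · have hB0 := M.B_off i j hat
      have hs0 : Am s i j = 0 := by simp [hAm, hB0, hat]
      have ht0 : Am t i j = 0 := by simp [hAm, hB0, hat]
      rw [hs0, ht0, mul_zero]
    · have hBe := M.B_edge i j hat
      have hds := hdpos s hs i
      have hdt := hdpos t ht i
      set Ns : ℝ := M.B i j - s * (M.B i j - M.βmin * M.Atil i j) with hNs
      set Nt : ℝ := M.B i j - t * (M.B i j - M.βmin * M.Atil i j) with hNt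
      have hNs0 : 0 ≤ Ns := hNnn s hs i j
      have hNt0 : 0 ≤ Nt := hNnn t ht i j
      have hNtlb : M.βmin ≤ Nt := by
        rw [hNt, hat, mul_one]
        nlinarith [ht.1, ht.2]
      have hts : t - s ≤ h := by rw [hh]; rw [abs_sub_comm]; exact le_abs_self _
      have hst : s - t ≤ h := by rw [hh]; exact le_abs_self _
      have hBK1 : M.B i j ≤ K1 * M.βmin := by
        rw [hK1def, div_mul_cancel₀ _ (ne_of_gt M.βmin_pos)]
        exact hBle i j
      have hBK1' : M.B i j ≤ K1 * Nt :=
        le_trans hBK1 (mul_le_mul_of_nonneg_left hNtlb hK1)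
      have hNs' : Ns ≤ (1 + K1 * h) * Nt := by
        have hexp : Ns = Nt + (t - s) * (M.B i j - M.βmin) := by
          rw [hNs, hNt, hat, mul_one]; ring
        have w1 : (t - s) * (M.B i j - M.βmin) ≤ h * (M.B i j - M.βmin) :=
          mul_le_mul_of_nonneg_right hts (sub_nonneg.mpr hBe)
        have w2 : h * (M.B i j - M.βmin) ≤ h * M.B i j :=
          mul_le_mul_of_nonneg_left (by linarith [M.βmin_pos]) hh0
        have w3 : h * M.B i j ≤ h * (K1 * Nt) :=
          mul_le_mul_of_nonneg_left hBK1' hh0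
        have w4 : Nt + h * (K1 * Nt) = (1 + K1 * h) * Nt := by ring
        linarith
      have hδK2 : M.δ i ≤ K2 * M.δmin := by
        rw [hK2def, div_mul_cancel₀ _ (ne_of_gt M.δmin_pos)]
        exact hδle i
      have hδK2' : M.δ i ≤ K2 * d s i := by
        refine le_trans hδK2 (mul_le_mul_of_nonneg_left ?_ hK2)
        have h1 : 0 ≤ (M.δ i - M.δmin) * s :=
          mul_nonneg (sub_nonneg.mpr (M.δ_ge i)) hs.1
        simp only [hd]; linarith
      have hdt' : d t i ≤ (1 + K2 * h) * d s i := by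
        have hexp : d t i = d s i + (t - s) * (M.δ i - M.δmin) := by
          simp only [hd]; ring
        have w1 : (t - s) * (M.δ i - M.δmin) ≤ h * (M.δ i - M.δmin) :=
          mul_le_mul_of_nonneg_right hts (sub_nonneg.mpr (M.δ_ge i))
        have w2 : h * (M.δ i - M.δmin) ≤ h * M.δ i :=
          mul_le_mul_of_nonneg_left (by linarith [M.δmin_pos]) hh0
        have w3 : h * M.δ i ≤ h * (K2 * d s i) :=
          mul_le_mul_of_nonneg_left hδK2' hh0
        have w4 : d s i + h * (K2 * d s i) = (1 + K2 * h) * d s i := by ring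
        linarith
      have key : Ns * d t i ≤ ((1 + K * h) * Nt) * d s i := by
        have k1 : Ns * d t i ≤ ((1 + K1 * h) * Nt) * ((1 + K2 * h) * d s i) :=
          mul_le_mul hNs' hdt' hdt.le (by positivity)
        have hhh : 0 ≤ h - h * h := by nlinarith
        have k2 : ((1 + K1 * h) * Nt) * ((1 + K2 * h) * d s i) +
            K1 * K2 * (h - h * h) * (Nt * d s i) = ((1 + K * h) * Nt) * d s i := by
          rw [hKdef]; ring
        have k3 : 0 ≤ K1 * K2 * (h - h * h) * (Nt * d s i) := by
          have := mul_nonneg hNt0 hds.le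
          positivity
        linarith
      have e1 : Am s i j = Ns / d s i := by
        rw [hAm]; simp only [Matrix.of_apply]; rw [inv_mul_eq_div]
      have e2 : Am t i j = Nt / d t i := by
        rw [hAm]; simp only [Matrix.of_apply]; rw [inv_mul_eq_div]
      rw [e1, e2]
      have hfin : Ns / d s i ≤ ((1 + K * h) * Nt) / d t i := by
        rw [div_le_div_iff₀ hds hdt]; exact key
      calc Ns / d s i ≤ ((1 + K * h) * Nt) / d t i := hfin
        _ = (1 + K * h) * (Nt / d t i) := by ring
  -- the spectral radius along the path
  set g : ℝ → ℝ := fun t => specRad (Am t) with hg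
  have hgnn : ∀ t, 0 ≤ g t := fun t => SpecRadAux.specRad_nonneg _
  have hgle : ∀ s ∈ Icc (0:ℝ) 1, ∀ t ∈ Icc (0:ℝ) 1,
      g s ≤ (1 + K * |s - t|) * g t := by
    intro s hs t ht
    exact SpecRadAux.specRad_le_mul (hAnn s hs) (hAnn t ht)
      (by positivity) (hcomp s hs t ht)
  have h01 : (0:ℝ) ∈ Icc (0:ℝ) 1 := ⟨le_refl 0, zero_le_one⟩
  have h11 : (1:ℝ) ∈ Icc (0:ℝ) 1 := ⟨zero_le_one, le_refl 1⟩
  set C : ℝ := (1 + K) * g 0 with hCdef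
  have hC : 0 ≤ C := mul_nonneg (by linarith) (hgnn 0)
  have hgbnd : ∀ t ∈ Icc (0:ℝ) 1, g t ≤ C := by
    intro t ht
    refine le_trans (hgle t ht 0 h01) ?_
    rw [hCdef]
    have habs : |t - 0| ≤ 1 := by
      rw [sub_zero, abs_of_nonneg ht.1]; exact ht.2
    nlinarith [hgnn 0, mul_le_mul_of_nonneg_left habs hK]
  -- Lipschitz continuity of g on [0,1]
  have hcont : ContinuousOn g (Icc (0:ℝ) 1) := by
    refine (LipschitzOnWith.of_dist_le' (K := K * C) ?_).continuousOn
    intro s hs t ht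
    rw [Real.dist_eq, Real.dist_eq]
    have h1 : g s - g t ≤ K * C * |s - t| := by
      have := hgle s hs t ht
      have h2 : K * |s - t| * g t ≤ K * |s - t| * C :=
        mul_le_mul_of_nonneg_left (hgbnd t ht) (by positivity)
      nlinarith
    have h2 : g t - g s ≤ K * C * |s - t| := by
      have := hgle t ht s hs
      have h3 : K * |t - s| * g s ≤ K * |t - s| * C :=
        mul_le_mul_of_nonneg_left (hgbnd s hs) (by positivity)
      rw [abs_sub_comm]
      nlinarith
    rw [abs_sub_le_iff]
    exact ⟨h1, by rw [abs_sub_comm] at h2 ⊢; exact h2⟩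
  -- inverse of a diagonal matrix with nonzero entries
  have hinvdiag : ∀ v : Fin n → ℝ, (∀ i, v i ≠ 0) →
      (Matrix.diagonal v)⁻¹ = Matrix.diagonal (fun i => (v i)⁻¹) := by
    intro v hv
    refine Matrix.inv_eq_left_inv ?_
    rw [Matrix.diagonal_mul_diagonal]
    have he : (fun i => (v i)⁻¹ * v i) = fun _ => (1:ℝ) :=
      funext fun i => inv_mul_cancel₀ (hv i)
    rw [he, Matrix.diagonal_one]
  -- identification of g with Rnum along the path
  have hRnumEq : ∀ t ∈ Icc (0:ℝ) 1, M.Rnum (fun _ => t - 1/2) = g t := by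
    intro t ht
    have hDmat : M.Dmat (fun _ => t - 1/2) = Matrix.diagonal (d t) := by
      unfold EpiOpModel.Dmat
      exact congrArg Matrix.diagonal (by funext i; simp only [hd]; ring)
    have hprod : (M.Dmat (fun _ => t - 1/2))⁻¹ * M.Bmat (fun _ => t - 1/2) = Am t := by
      rw [hDmat, hinvdiag (d t) (fun i => (hdpos t ht i).ne')]
      ext i j
      rw [Matrix.diagonal_mul]
      simp only [hAm, Matrix.of_apply, EpiOpModel.Bmat, EpiOpModel.Bmin,
        Matrix.smul_apply, smul_eq_mul]
      ring
    rw [EpiOpModel.Rnum, hprod]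
  -- endpoints
  have hg0 : g 0 = M.Rmax := by
    have hpr : M.Dmin⁻¹ * M.B = Am 0 := by
      have hD : M.Dmin = Matrix.diagonal (d 0) := by
        rw [EpiOpModel.Dmin, Matrix.smul_one_eq_diagonal]
        exact congrArg Matrix.diagonal (by funext i; simp only [hd]; ring)
      rw [hD, hinvdiag (d 0) (fun i => (hdpos 0 h01 i).ne')]
      ext i j
      rw [Matrix.diagonal_mul]
      simp only [hAm, Matrix.of_apply]
      ring
    rw [EpiOpModel.Rmax, hpr]
  have hg1 : g 1 = M.Rmin := by
    have hpr : M.Dmax⁻¹ * M.Bmin = Am 1 := by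
      have hD : M.Dmax = Matrix.diagonal (d 1) := by
        rw [EpiOpModel.Dmax]
        exact congrArg Matrix.diagonal (by funext i; simp only [hd]; ring)
      rw [hD, hinvdiag (d 1) (fun i => (hdpos 1 h11 i).ne')]
      ext i j
      rw [Matrix.diagonal_mul]
      simp only [hAm, Matrix.of_apply, EpiOpModel.Bmin, Matrix.smul_apply, smul_eq_mul]
      ring
    rw [EpiOpModel.Rmin, hpr]
  -- intermediate value theorem
  have hIVT := intermediate_value_Icc' zero_le_one hcont
  have h1mem : (1:ℝ) ∈ Icc (g 1) (g 0) := by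
    constructor
    · rw [hg1]; exact hRmin.le
    · rw [hg0]; exact hRmax.le
  obtain ⟨t, ht, hgt⟩ := hIVT h1mem
  refine ⟨fun _ => t - 1/2, fun i => ⟨by linarith [ht.1], by linarith [ht.2]⟩, ?_⟩
  rw [hRnumEq t ht, hgt]
end
end

section
/- Selection of extreme stubborn communities: consider an opinion vector ⃗o with both positive and negative entries and ⃗o_i ∈ {−0.5, 0.5} for all i ∈ [n]. If R^{⃗o} = ρ(D(⃗o)^{−1} B(⃗o)) < 1, then by fixing o_i(t) = 0.5 for all t ≥ 0 at exactly those communities i with ⃗o_i = 0.5 (making them stubborn) while letting the remaining communities' opinions evolve freely in [−0.5, 0.5], the Opinion-Dependent Reproduction Number satisfies R^{o(t)} < 1 for all t, and the coupled epidemic–opinion system reaches a healthy state with x(t) → 0. -/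
open Matrix Filter Set Topology

noncomputable section

namespace StubAux
open EpiOpModel


lemma sgnm_mul_self (z : ℝ) : sgnm z * z = |z| := by
  unfold sgnm
  split
  · rw [abs_of_nonneg ‹_›, one_mul]
  · rw [abs_of_neg (lt_of_not_ge ‹_›)]; ring

lemma sgnm_of_pos {z : ℝ} (h : 0 < z) : sgnm z = 1 := if_pos h.le

lemma sgnm_of_neg {z : ℝ} (h : z < 0) : sgnm z = -1 := if_neg (not_le.mpr h)

/-- barrier lemma -/
lemma deriv_nonpos_at_contact {h : ℝ → ℝ} {h' τ : ℝ} (hτ : 0 < τ)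
    (hd : HasDerivAt h h' τ) (h0 : h τ = 0)
    (hpos : ∀ t, 0 ≤ t → t < τ → 0 < h t) : h' ≤ 0 := by
  have hs : Tendsto (slope h τ) (𝓝[≠] τ) (𝓝 h') := hasDerivAt_iff_tendsto_slope.mp hd
  have hmono : 𝓝[<] τ ≤ 𝓝[≠] τ := nhdsWithin_mono τ (fun t ht => ne_of_lt ht)
  refine le_of_tendsto (hs.mono_left hmono) ?_
  filter_upwards [Ioo_mem_nhdsLT_of_mem (show τ ∈ Ioc 0 τ from ⟨hτ, le_refl τ⟩)] with t ht
  have hpt : 0 < h t := hpos t ht.1.le ht.2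
  have : slope h τ t = h t / (t - τ) := by
    rw [slope_def_field, h0, sub_zero]
  rw [this]
  exact div_nonpos_of_nonneg_of_nonpos hpt.le (by linarith [ht.2])

/-- limit lemma at left endpoint -/
lemma le_at_sup {f g : ℝ → ℝ} (hf : Continuous f) (hg : Continuous g) {τ : ℝ} (hτ : 0 < τ)
    (h : ∀ t, 0 ≤ t → t < τ → f t ≤ g t) : f τ ≤ g τ := by
  haveI hne : (𝓝[Ico (0:ℝ) τ] τ).NeBot := by
    apply mem_closure_iff_nhdsWithin_neBot.mp
    rw [closure_Ico (ne_of_lt hτ)]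
    exact ⟨hτ.le, le_refl τ⟩
  refine le_of_tendsto_of_tendsto (b := 𝓝[Ico (0:ℝ) τ] τ) ((hf.tendsto τ).mono_left nhdsWithin_le_nhds)
    ((hg.tendsto τ).mono_left nhdsWithin_le_nhds) ?_
  filter_upwards [self_mem_nhdsWithin] with t ht
  exact h t ht.1 ht.2


variable {n : ℕ} (M : EpiOpModel n)

lemma fx_apply (x o : Fin n → ℝ) (i : Fin n) :
    M.fx x o i = -((M.δmin + (M.δ i - M.δmin) * (o i + 1/2)) * x i)
      + (1 - x i) * ∑ j, (M.B i j - (o i + 1/2) * (M.B i j - M.βmin * M.Atil i j)) * x j := by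
  simp only [EpiOpModel.fx, EpiOpModel.Dmat, Pi.add_apply, Pi.neg_apply,
    Matrix.mulVec_diagonal]
  simp only [EpiOpModel.Bmat, EpiOpModel.Bmin, Matrix.mulVec, dotProduct,
    Matrix.of_apply, Matrix.smul_apply, smul_eq_mul, Finset.mul_sum]

lemma fo_apply (x o : Fin n → ℝ) (i : Fin n) :
    M.fo x o i = x i - sgnm (o i) * (∑ j, M.Au i j * (|o i| - |o j|)) - o i - 1/2 := by
  have h1 : M.Lsgn o *ᵥ o = gaugeMat o *ᵥ (M.Lu *ᵥ (gaugeMat o *ᵥ o)) := by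
    rw [EpiOpModel.Lsgn, Matrix.mulVec_mulVec, Matrix.mulVec_mulVec]
  have key : ∀ w : Fin n → ℝ, ∀ i, (M.Lu *ᵥ w) i = ∑ j, M.Au i j * (w i - w j) := by
    intro w i
    rw [EpiOpModel.Lu, lapOf, Matrix.sub_mulVec, Pi.sub_apply, Matrix.mulVec_diagonal]
    simp only [Matrix.mulVec, dotProduct]
    rw [Finset.sum_mul, ← Finset.sum_sub_distrib]
    exact Finset.sum_congr rfl (fun j _ => (mul_sub _ _ _).symm)
  have h2 : ∀ i, (M.Lsgn o *ᵥ o) i = sgnm (o i) * (∑ j, M.Au i j * (|o i| - |o j|)) := by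
    intro i
    rw [h1]
    simp only [gaugeMat]
    rw [Matrix.mulVec_diagonal, key]
    simp only [Matrix.mulVec_diagonal, sgnm_mul_self]
  have : M.fo x o i = x i - ((M.Lsgn o *ᵥ o) i + o i) - 1/2 := by
    simp [EpiOpModel.fo, Matrix.add_mulVec, Matrix.one_mulVec]
  rw [this, h2]
  ring

lemma B_nonneg (i j : Fin n) : 0 ≤ M.B i j := by
  rcases M.Atil_01 i j with h | h
  · rw [M.B_off i j h]
  · exact le_trans M.βmin_pos.le (M.B_edge i j h)

lemma Bmin_le_B (i j : Fin n) : M.βmin * M.Atil i j ≤ M.B i j := by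
  rcases M.Atil_01 i j with h | h
  · rw [h, M.B_off i j h, mul_zero]
  · rw [h, mul_one]; exact M.B_edge i j h

lemma Bmin_nonneg (i j : Fin n) : 0 ≤ M.βmin * M.Atil i j := by
  rcases M.Atil_01 i j with h | h <;> rw [h]
  · rw [mul_zero]
  · rw [mul_one]; exact M.βmin_pos.le

lemma δ_nonneg (i : Fin n) : 0 ≤ M.δ i := le_trans M.δmin_pos.le (M.δ_ge i)

/-- The constant used in the perturbed invariance argument. -/
def Kc : ℝ := 1 + (∑ i, 2 * M.δ i) + (∑ i, ∑ j, 8 * M.B i j)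

lemma Kc_ge_one : 1 ≤ Kc M := by
  have h1 : 0 ≤ ∑ i, 2 * M.δ i :=
    Finset.sum_nonneg fun i _ => by have := δ_nonneg M i; positivity
  have h2 : 0 ≤ ∑ i : Fin n, ∑ j, 8 * M.B i j :=
    Finset.sum_nonneg fun i _ => Finset.sum_nonneg fun j _ => by
      have := B_nonneg M i j; positivity
  unfold Kc; linarith

lemma Kc_pos : 0 < Kc M := lt_of_lt_of_le one_pos (Kc_ge_one M)

lemma δ_le_sum (i : Fin n) : M.δ i ≤ ∑ k, 2 * M.δ k := by
  have h := Finset.single_le_sum (f := fun k => 2 * M.δ k)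
    (fun k _ => by have := δ_nonneg M k; positivity) (Finset.mem_univ i)
  linarith [δ_nonneg M i]

lemma Brow_le_sum (i : Fin n) : (4:ℝ) * ∑ j, M.B i j ≤ ∑ k, ∑ j, 8 * M.B k j := by
  have h1 : ∑ j, (4:ℝ) * M.B i j ≤ ∑ j, 8 * M.B i j :=
    Finset.sum_le_sum fun j _ => by linarith [B_nonneg M i j]
  have h2 := Finset.single_le_sum (f := fun k => ∑ j, (8:ℝ) * M.B k j)
    (fun k _ => Finset.sum_nonneg fun j _ => by
      have := B_nonneg M k j; positivity) (Finset.mem_univ i)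
  rw [Finset.mul_sum]
  linarith

lemma est_x_lower (xv ovv : Fin n → ℝ) (i : Fin n) (η : ℝ) (hη0 : 0 < η) (hη1 : η ≤ 1)
    (hxb : ∀ j, -η ≤ xv j ∧ xv j ≤ 1 + η)
    (hob : ∀ j, -(1/2) - η ≤ ovv j ∧ ovv j ≤ 1/2 + η)
    (hxi : xv i = -η) :
    -(Kc M * η) < M.fx xv ovv i := by
  rw [fx_apply, hxi]
  have hδi : M.δmin ≤ M.δ i := M.δ_ge i
  have hδmin := M.δmin_pos
  have hoi1 := (hob i).1
  have hoi2 := (hob i).2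
  have k1 : 0 ≤ (M.δ i - M.δmin) * (ovv i + 1/2 + η) :=
    mul_nonneg (by linarith) (by linarith)
  have hd : -(M.δ i * η) ≤ -((M.δmin + (M.δ i - M.δmin) * (ovv i + 1/2)) * -η) := by
    nlinarith [mul_nonneg k1 hη0.le,
      mul_nonneg (mul_nonneg (by linarith : (0:ℝ) ≤ M.δ i - M.δmin) hη0.le)
        (by linarith : (0:ℝ) ≤ 1 - η)]
  have hsum : ∀ j ∈ Finset.univ,
      -(2 * η * M.B i j) ≤ (M.B i j - (ovv i + 1/2) * (M.B i j - M.βmin * M.Atil i j)) * xv j := by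
    intro j _
    have hb := B_nonneg M i j
    have hbm := Bmin_le_B M i j
    have hbm0 := Bmin_nonneg M i j
    have hxj1 := (hxb j).1
    have hxj2 := (hxb j).2
    set a := M.B i j - (ovv i + 1/2) * (M.B i j - M.βmin * M.Atil i j) with ha
    have hal : -(η * M.B i j) ≤ a := by rw [ha]; nlinarith
    have hau : a ≤ (1 + η) * M.B i j := by rw [ha]; nlinarith
    have hbη : 0 ≤ M.B i j * η := mul_nonneg hb hη0.le
    have hbη2 : 0 ≤ M.B i j * η * (1 - η) := mul_nonneg hbη (by linarith)
    rcases le_or_gt 0 a with h | h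
    · have p1 := mul_le_mul_of_nonneg_left hxj1 h
      have p2 := mul_le_mul_of_nonneg_right hau hη0.le
      nlinarith
    · have p1 := mul_le_mul_of_nonpos_left hxj2 h.le
      have p2 := mul_le_mul_of_nonneg_right hal (by linarith : (0:ℝ) ≤ 1 + η)
      nlinarith
  have hS : -(2 * η * ∑ j, M.B i j) ≤
      ∑ j, (M.B i j - (ovv i + 1/2) * (M.B i j - M.βmin * M.Atil i j)) * xv j := by
    have h := Finset.sum_le_sum hsum
    have he : ∑ j, -(2 * η * M.B i j) = -(2 * η * ∑ j, M.B i j) := by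
      rw [Finset.mul_sum, ← Finset.sum_neg_distrib]
    rw [← he]; exact h
  set S := ∑ j, (M.B i j - (ovv i + 1/2) * (M.B i j - M.βmin * M.Atil i j)) * xv j with hSdef
  have hBrow : 0 ≤ ∑ j, M.B i j := Finset.sum_nonneg fun j _ => B_nonneg M i j
  have hmul : -(4 * η * ∑ j, M.B i j) ≤ (1 - -η) * S := by
    have q1 := mul_le_mul_of_nonneg_left hS (by linarith : (0:ℝ) ≤ 1 + η)
    nlinarith [mul_nonneg (mul_nonneg hη0.le hBrow) (by linarith : (0:ℝ) ≤ 1 - η)]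
  have h1' : M.δ i * η ≤ (∑ k, 2 * M.δ k) * η :=
    mul_le_mul_of_nonneg_right (δ_le_sum M i) hη0.le
  have h2' : 4 * η * ∑ j, M.B i j ≤ (∑ k, ∑ j, 8 * M.B k j) * η := by
    have := mul_le_mul_of_nonneg_right (Brow_le_sum M i) hη0.le
    nlinarith
  unfold Kc
  nlinarith


lemma est_x_upper (xv ovv : Fin n → ℝ) (i : Fin n) (η : ℝ) (hη0 : 0 < η) (hη1 : η ≤ 1)
    (hxb : ∀ j, -η ≤ xv j ∧ xv j ≤ 1 + η)
    (hob : ∀ j, -(1/2) - η ≤ ovv j ∧ ovv j ≤ 1/2 + η)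
    (hxi : xv i = 1 + η) :
    M.fx xv ovv i < Kc M * η := by
  rw [fx_apply, hxi]
  have hδi : M.δmin ≤ M.δ i := M.δ_ge i
  have hδmin := M.δmin_pos
  have hoi1 := (hob i).1
  have hoi2 := (hob i).2
  have k1 : 0 ≤ (M.δ i - M.δmin) * (ovv i + 1/2 + η) :=
    mul_nonneg (by linarith) (by linarith)
  -- upper bound on the potential term
  have hd : -((M.δmin + (M.δ i - M.δmin) * (ovv i + 1/2)) * (1 + η)) ≤
      2 * M.δ i * η - M.δmin := by
    nlinarith [mul_nonneg k1 hη0.le,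
      mul_nonneg (mul_nonneg (by linarith : (0:ℝ) ≤ M.δ i - M.δmin) hη0.le)
        (by linarith : (0:ℝ) ≤ 1 - η)]
  have hsum : ∀ j ∈ Finset.univ,
      -(2 * M.B i j) ≤ (M.B i j - (ovv i + 1/2) * (M.B i j - M.βmin * M.Atil i j)) * xv j := by
    intro j _
    have hb := B_nonneg M i j
    have hbm := Bmin_le_B M i j
    have hbm0 := Bmin_nonneg M i j
    have hxj1 := (hxb j).1
    have hxj2 := (hxb j).2
    set a := M.B i j - (ovv i + 1/2) * (M.B i j - M.βmin * M.Atil i j) with ha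
    have hal : -(η * M.B i j) ≤ a := by rw [ha]; nlinarith
    have hau : a ≤ (1 + η) * M.B i j := by rw [ha]; nlinarith
    rcases le_or_gt 0 a with h | h
    · have p1 := mul_le_mul_of_nonneg_left hxj1 h
      nlinarith [mul_nonneg hb hη0.le]
    · have p1 := mul_le_mul_of_nonpos_left hxj2 h.le
      nlinarith [mul_nonneg hb hη0.le]
  have hS : -(2 * ∑ j, M.B i j) ≤
      ∑ j, (M.B i j - (ovv i + 1/2) * (M.B i j - M.βmin * M.Atil i j)) * xv j := by
    have h := Finset.sum_le_sum hsum
    have he : ∑ j, -(2 * M.B i j) = -(2 * ∑ j, M.B i j) := by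
      rw [Finset.mul_sum, ← Finset.sum_neg_distrib]
    rw [← he]; exact h
  set S := ∑ j, (M.B i j - (ovv i + 1/2) * (M.B i j - M.βmin * M.Atil i j)) * xv j with hSdef
  have hBrow : 0 ≤ ∑ j, M.B i j := Finset.sum_nonneg fun j _ => B_nonneg M i j
  have hmul : (1 - (1 + η)) * S ≤ 2 * η * ∑ j, M.B i j := by
    have q1 := mul_le_mul_of_nonneg_right hS hη0.le
    nlinarith
  have h1' : 2 * M.δ i * η ≤ (∑ k, 2 * M.δ k) * η := by
    have h := Finset.single_le_sum (f := fun k => 2 * M.δ k)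
      (fun k _ => by have := δ_nonneg M k; positivity) (Finset.mem_univ i)
    nlinarith
  have h2' : 2 * η * ∑ j, M.B i j ≤ (∑ k, ∑ j, 8 * M.B k j) * η := by
    have := mul_le_mul_of_nonneg_right (Brow_le_sum M i) hη0.le
    nlinarith [mul_nonneg hη0.le hBrow]
  unfold Kc
  nlinarith

lemma est_o_upper (xv ovv : Fin n → ℝ) (i : Fin n) (η : ℝ) (hη0 : 0 < η)
    (hxb : ∀ j, -η ≤ xv j ∧ xv j ≤ 1 + η)
    (hob : ∀ j, -(1/2) - η ≤ ovv j ∧ ovv j ≤ 1/2 + η)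
    (hoi : ovv i = 1/2 + η) :
    M.fo xv ovv i < Kc M * η := by
  rw [fo_apply]
  have hsg : sgnm (ovv i) = 1 := sgnm_of_pos (by rw [hoi]; linarith)
  have habs : |ovv i| = 1/2 + η := by rw [hoi]; exact abs_of_pos (by linarith)
  have hsum : 0 ≤ ∑ j, M.Au i j * (|ovv i| - |ovv j|) := by
    apply Finset.sum_nonneg
    intro j _
    apply mul_nonneg (M.Au_nonneg i j)
    have h1 := (hob j).1
    have h2 := (hob j).2
    have : |ovv j| ≤ 1/2 + η := abs_le.mpr ⟨by linarith, by linarith⟩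
    rw [habs]; linarith
  have hx2 := (hxb i).2
  rw [hsg]
  nlinarith [hsum, hx2, hoi, mul_pos (Kc_pos M) hη0]

lemma est_o_lower (xv ovv : Fin n → ℝ) (i : Fin n) (η : ℝ) (hη0 : 0 < η)
    (hxb : ∀ j, -η ≤ xv j ∧ xv j ≤ 1 + η)
    (hob : ∀ j, -(1/2) - η ≤ ovv j ∧ ovv j ≤ 1/2 + η)
    (hoi : ovv i = -(1/2) - η) :
    -(Kc M * η) < M.fo xv ovv i := by
  rw [fo_apply]
  have hsg : sgnm (ovv i) = -1 := sgnm_of_neg (by rw [hoi]; linarith)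
  have habs : |ovv i| = 1/2 + η := by
    rw [hoi]; rw [abs_of_neg (by linarith : -(1/2) - η < 0)]; ring
  have hsum : 0 ≤ ∑ j, M.Au i j * (|ovv i| - |ovv j|) := by
    apply Finset.sum_nonneg
    intro j _
    apply mul_nonneg (M.Au_nonneg i j)
    have h1 := (hob j).1
    have h2 := (hob j).2
    have : |ovv j| ≤ 1/2 + η := abs_le.mpr ⟨by linarith, by linarith⟩
    rw [habs]; linarith
  have hx1 := (hxb i).1
  rw [hsg]
  nlinarith [hsum, hx1, hoi, mul_pos (Kc_pos M) hη0]


lemma invariance (ov : Fin n → ℝ) (hov : ∀ i, ov i = -(1/2) ∨ ov i = (1/2))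
    (x o : ℝ → Fin n → ℝ)
    (hx : ∀ t : ℝ, ∀ i : Fin n, HasDerivAt (fun s => x s i) (M.fx (x t) (o t) i) t)
    (hstub : ∀ i : Fin n, ov i = (1/2) → ∀ t : ℝ, o t i = (1/2))
    (hfree : ∀ i : Fin n, ov i = -(1/2) → ∀ t : ℝ,
      HasDerivAt (fun s => o s i) (M.fo (x t) (o t) i) t)
    (hbox0 : M.InBox (x 0) (o 0)) :
    ∀ t : ℝ, 0 ≤ t →
      (∀ i, 0 ≤ x t i ∧ x t i ≤ 1) ∧ (∀ i, -(1/2) ≤ o t i ∧ o t i ≤ 1/2) := by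
  have hK1 := Kc_ge_one M
  have hK0 := Kc_pos M
  -- continuity of coordinates
  have hcx : ∀ i, Continuous fun t => x t i := fun i =>
    continuous_iff_continuousAt.mpr fun t => (hx t i).continuousAt
  have hco : ∀ i, Continuous fun t => o t i := by
    intro i
    rcases hov i with hi | hi
    · exact continuous_iff_continuousAt.mpr fun t => (hfree i hi t).continuousAt
    · have : (fun t => o t i) = fun _ => (1/2 : ℝ) := funext fun t => hstub i hi t
      rw [this]; exact continuous_const
  -- the exponential envelope
  set η : ℝ → ℝ → ℝ := fun ε t => ε * Real.exp (Kc M * t) with hηdef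
  have hηc : ∀ ε, Continuous (η ε) := fun ε =>
    continuous_const.mul (Real.continuous_exp.comp (continuous_const.mul continuous_id))
  have hηd : ∀ ε τ, HasDerivAt (η ε) (Kc M * η ε τ) τ := by
    intro ε τ
    have h1 : HasDerivAt (fun t : ℝ => Kc M * t) (Kc M) τ := by
      simpa using (hasDerivAt_id τ).const_mul (Kc M)
    have h2 := (Real.hasDerivAt_exp (Kc M * τ)).comp τ h1
    have h3 := h2.const_mul ε
    exact h3.congr_deriv (by simp only [hηdef]; ring)
  -- main perturbed claim
  have key : ∀ T, 0 ≤ T → ∀ ε, 0 < ε → ε * Real.exp (Kc M * T) ≤ 1 →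
      ∀ t, 0 ≤ t → t ≤ T →
      ((∀ i, -(η ε t) < x t i ∧ x t i < 1 + η ε t) ∧
       (∀ i, -(1/2) - η ε t < o t i ∧ o t i < 1/2 + η ε t)) := by
    intro T hT ε hε hεT
    set Q : ℝ → Prop := fun s =>
      ((∀ i, -(η ε s) < x s i ∧ x s i < 1 + η ε s) ∧
       (∀ i, -(1/2) - η ε s < o s i ∧ o s i < 1/2 + η ε s)) with hQdef
    intro t ht0 htT
    by_contra hbad
    have hQopen : IsOpen {s : ℝ | Q s} := by
      rw [hQdef]
      simp only [Set.setOf_and]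
      apply IsOpen.inter
      · rw [Set.setOf_forall]
        refine isOpen_iInter_of_finite fun i => ?_
        simp only [Set.setOf_and]
        exact (isOpen_lt (hηc ε).neg (hcx i)).inter
          (isOpen_lt (hcx i) (continuous_const.add (hηc ε)))
      · rw [Set.setOf_forall]
        refine isOpen_iInter_of_finite fun i => ?_
        simp only [Set.setOf_and]
        exact (isOpen_lt (continuous_const.sub (hηc ε)) (hco i)).inter
          (isOpen_lt (hco i) (continuous_const.add (hηc ε)))
    set S : Set ℝ := Icc 0 T ∩ {s | Q s}ᶜ with hSdef
    have hSne : S.Nonempty := ⟨t, ⟨ht0, htT⟩, hbad⟩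
    have hScl : IsClosed S := isClosed_Icc.inter hQopen.isClosed_compl
    have hSbdd : BddBelow S := ⟨0, fun s hs => hs.1.1⟩
    set τ := sInf S with hτdef
    have hτS : τ ∈ S := hScl.csInf_mem hSne hSbdd
    have hτ0 : 0 ≤ τ := hτS.1.1
    have hτT : τ ≤ T := hτS.1.2
    -- positivity of the envelope, and the bound η ≤ 1 on [0,T]
    have hηpos : ∀ s, 0 < η ε s := fun s => mul_pos hε (Real.exp_pos _)
    have hη1 : ∀ s, s ≤ T → η ε s ≤ 1 := by
      intro s hs
      have : Real.exp (Kc M * s) ≤ Real.exp (Kc M * T) :=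
        Real.exp_le_exp.mpr (by nlinarith)
      calc η ε s = ε * Real.exp (Kc M * s) := rfl
        _ ≤ ε * Real.exp (Kc M * T) := by nlinarith
        _ ≤ 1 := hεT
    -- Q holds at time 0
    have hQ0 : Q 0 := by
      have hη0' : η ε 0 = ε := by simp [hηdef]
      constructor
      · intro i
        have h1 := (hbox0.1 i).1
        have h2 := (hbox0.1 i).2
        rw [hη0']; constructor <;> linarith
      · intro i
        have h1 := (hbox0.2 i).1
        have h2 := (hbox0.2 i).2
        rw [hη0']
        constructor
        · simp only [one_div] at h1 ⊢; linarith
        · simp only [one_div] at h2 ⊢; linarith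
    have hτpos : 0 < τ := by
      rcases lt_or_eq_of_le hτ0 with h | h
      · exact h
      · exact absurd hQ0 (h ▸ hτS.2)
    -- Q holds strictly before τ
    have hbefore : ∀ s, 0 ≤ s → s < τ → Q s := by
      intro s h0 hlt
      by_contra hq
      have : τ ≤ s := csInf_le hSbdd ⟨⟨h0, le_trans hlt.le hτT⟩, hq⟩
      linarith
    -- closure bounds at τ
    have cx1 : ∀ i, -(η ε τ) ≤ x τ i := fun i =>
      le_at_sup (hηc ε).neg (hcx i) hτpos fun s h0 hlt => ((hbefore s h0 hlt).1 i).1.le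
    have cx2 : ∀ i, x τ i ≤ 1 + η ε τ := fun i =>
      le_at_sup (hcx i) (continuous_const.add (hηc ε)) hτpos
        fun s h0 hlt => ((hbefore s h0 hlt).1 i).2.le
    have co1 : ∀ i, -(1/2) - η ε τ ≤ o τ i := fun i =>
      le_at_sup (continuous_const.sub (hηc ε)) (hco i) hτpos
        fun s h0 hlt => ((hbefore s h0 hlt).2 i).1.le
    have co2 : ∀ i, o τ i ≤ 1/2 + η ε τ := fun i =>
      le_at_sup (hco i) (continuous_const.add (hηc ε)) hτpos
        fun s h0 hlt => ((hbefore s h0 hlt).2 i).2.le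
    have hxb : ∀ j, -(η ε τ) ≤ x τ j ∧ x τ j ≤ 1 + η ε τ := fun j => ⟨cx1 j, cx2 j⟩
    have hob : ∀ j, -(1/2) - η ε τ ≤ o τ j ∧ o τ j ≤ 1/2 + η ε τ := fun j => ⟨co1 j, co2 j⟩
    -- some strict inequality fails at τ
    have hnQ : ¬ Q τ := hτS.2
    rw [hQdef] at hnQ
    rcases not_and_or.mp hnQ with hA | hB
    · obtain ⟨i, hi⟩ := not_forall.mp hA
      rcases not_and_or.mp hi with h | h
      · -- x hits lower barrier
        push_neg at h
        have heq : x τ i = -(η ε τ) := le_antisymm h (cx1 i)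
        have hd : HasDerivAt (fun s => x s i + η ε s)
            (M.fx (x τ) (o τ) i + Kc M * η ε τ) τ := (hx τ i).add (hηd ε τ)
        have hcon := deriv_nonpos_at_contact hτpos hd (by rw [heq]; ring)
          (fun s h0 hlt => by have := ((hbefore s h0 hlt).1 i).1; linarith)
        have hest := est_x_lower M (x τ) (o τ) i (η ε τ) (hηpos τ) (hη1 τ hτT) hxb hob heq
        linarith
      · -- x hits upper barrier
        push_neg at h
        have heq : x τ i = 1 + η ε τ := le_antisymm (cx2 i) h
        have hd : HasDerivAt (fun s => 1 + η ε s - x s i)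
            (Kc M * η ε τ - M.fx (x τ) (o τ) i) τ := by
          have := ((hasDerivAt_const τ (1:ℝ)).add (hηd ε τ)).sub (hx τ i)
          exact this.congr_deriv (by ring)
        have hcon := deriv_nonpos_at_contact hτpos hd (by rw [heq]; ring)
          (fun s h0 hlt => by have := ((hbefore s h0 hlt).1 i).2; linarith)
        have hest := est_x_upper M (x τ) (o τ) i (η ε τ) (hηpos τ) (hη1 τ hτT) hxb hob heq
        linarith
    · obtain ⟨i, hi⟩ := not_forall.mp hB
      rcases not_and_or.mp hi with h | h
      · -- o hits lower barrier
        push_neg at h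
        have heq : o τ i = -(1/2) - η ε τ := le_antisymm h (co1 i)
        rcases hov i with hif | hif
        · have hd : HasDerivAt (fun s => o s i + η ε s + 1/2)
              (M.fo (x τ) (o τ) i + Kc M * η ε τ) τ :=
            ((hfree i hif τ).add (hηd ε τ)).add_const (1/2)
          have hcon := deriv_nonpos_at_contact hτpos hd (by rw [heq]; ring)
            (fun s h0 hlt => by have := ((hbefore s h0 hlt).2 i).1; linarith)
          have hest := est_o_lower M (x τ) (o τ) i (η ε τ) (hηpos τ) hxb hob heq
          linarith
        · have := hstub i hif τ
          rw [this] at heq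
          have := hηpos τ
          linarith
      · -- o hits upper barrier
        push_neg at h
        have heq : o τ i = 1/2 + η ε τ := le_antisymm (co2 i) h
        rcases hov i with hif | hif
        · have hd : HasDerivAt (fun s => 1/2 + η ε s - o s i)
              (Kc M * η ε τ - M.fo (x τ) (o τ) i) τ := by
            have := ((hasDerivAt_const τ ((1:ℝ)/2)).add (hηd ε τ)).sub (hfree i hif τ)
            exact this.congr_deriv (by ring)
          have hcon := deriv_nonpos_at_contact hτpos hd (by rw [heq]; ring)
            (fun s h0 hlt => by have := ((hbefore s h0 hlt).2 i).2; linarith)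
          have hest := est_o_upper M (x τ) (o τ) i (η ε τ) (hηpos τ) hxb hob heq
          linarith
        · have := hstub i hif τ
          rw [this] at heq
          have := hηpos τ
          linarith
  -- pass to the limit ε → 0
  have margin : ∀ t, 0 ≤ t → ∀ c, 0 < c →
      ((∀ i, -c < x t i ∧ x t i < 1 + c) ∧
       (∀ i, -(1/2) - c < o t i ∧ o t i < 1/2 + c)) := by
    intro t ht c hc
    set ε := min 1 c * Real.exp (-(Kc M * t)) with hεdef
    have hεpos : 0 < ε := mul_pos (lt_min one_pos hc) (Real.exp_pos _)
    have hεexp : ε * Real.exp (Kc M * t) = min 1 c := by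
      rw [hεdef, mul_assoc, ← Real.exp_add]
      simp
    have h1 : ε * Real.exp (Kc M * t) ≤ 1 := by rw [hεexp]; exact min_le_left _ _
    obtain ⟨hX, hO⟩ := key t ht ε hεpos h1 t ht (le_refl t)
    have hηt : η ε t = min 1 c := hεexp
    have hmc : min 1 c ≤ c := min_le_right _ _
    constructor
    · intro i
      have := hX i
      rw [hηt] at this
      exact ⟨by linarith [this.1], by linarith [this.2]⟩
    · intro i
      have := hO i
      rw [hηt] at this
      exact ⟨by linarith [this.1], by linarith [this.2]⟩
  intro t ht
  constructor
  · intro i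
    constructor
    · by_contra h
      push_neg at h
      have := ((margin t ht (-(x t i)) (by linarith)).1 i).1
      linarith
    · by_contra h
      push_neg at h
      have := ((margin t ht (x t i - 1) (by linarith)).1 i).2
      linarith
  · intro i
    constructor
    · by_contra h
      push_neg at h
      have := ((margin t ht (-(1/2) - o t i) (by linarith)).2 i).1
      linarith
    · by_contra h
      push_neg at h
      have := ((margin t ht (o t i - 1/2) (by linarith)).2 i).2
      linarith


section Spectral

attribute [local instance] Matrix.linftyOpSemiNormedRing Matrix.linftyOpNormedRing
  Matrix.linftyOpNormedSpace Matrix.linftyOpNormedAlgebra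

lemma map_pow_comm (A : Matrix (Fin n) (Fin n) ℝ) (k : ℕ) :
    (A.map (algebraMap ℝ ℂ)) ^ k = (A ^ k).map (algebraMap ℝ ℂ) := by
  have h := map_pow ((algebraMap ℝ ℂ).mapMatrix) A k
  simpa only [RingHom.mapMatrix_apply] using h.symm

lemma pow_entry_nonneg {A : Matrix (Fin n) (Fin n) ℝ} (hA : ∀ i j, 0 ≤ A i j) :
    ∀ k, ∀ i j, 0 ≤ (A ^ k) i j := by
  intro k
  induction k with
  | zero =>
    intro i j
    rw [pow_zero, Matrix.one_apply]
    split <;> norm_num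
  | succ k ih =>
    intro i j
    rw [pow_succ, Matrix.mul_apply]
    exact Finset.sum_nonneg fun l _ => mul_nonneg (ih i l) (hA l j)

lemma pow_mulVec_le {A : Matrix (Fin n) (Fin n) ℝ} {v : Fin n → ℝ} {r : ℝ}
    (hA : ∀ i j, 0 ≤ A i j) (hv0 : ∀ i, 0 ≤ v i) (hr : 0 ≤ r)
    (hAv : ∀ i, (A *ᵥ v) i ≤ r * v i) :
    ∀ k, ∀ i, ((A ^ k) *ᵥ v) i ≤ r ^ k * v i := by
  intro k
  induction k with
  | zero =>
    intro i
    rw [pow_zero, Matrix.one_mulVec, pow_zero, one_mul]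
  | succ k ih =>
    intro i
    have h1 : ((A ^ (k+1)) *ᵥ v) i = ((A ^ k) *ᵥ (A *ᵥ v)) i := by
      rw [Matrix.mulVec_mulVec, ← pow_succ]
    rw [h1]
    have h2 : ((A ^ k) *ᵥ (A *ᵥ v)) i ≤ ((A ^ k) *ᵥ (r • v)) i := by
      simp only [Matrix.mulVec, dotProduct]
      apply Finset.sum_le_sum
      intro j _
      apply mul_le_mul_of_nonneg_left _ (pow_entry_nonneg hA k i j)
      simpa [Matrix.mulVec, dotProduct] using hAv j
    have h3 : ((A ^ k) *ᵥ (r • v)) i = r * (((A ^ k) *ᵥ v) i) := by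
      rw [Matrix.mulVec_smul]
      simp
    have h4 : r * (((A ^ k) *ᵥ v) i) ≤ r * (r ^ k * v i) :=
      mul_le_mul_of_nonneg_left (ih i) hr
    rw [pow_succ]
    calc ((A ^ k) *ᵥ (A *ᵥ v)) i ≤ r * (((A ^ k) *ᵥ v) i) := by rw [← h3]; exact h2
      _ ≤ r * (r ^ k * v i) := h4
      _ = r ^ k * r * v i := by ring

lemma norm_le_of_entries (N : Matrix (Fin n) (Fin n) ℂ) (c : ℝ) (hc : 0 ≤ c)
    (h : ∀ i j, ‖N i j‖ ≤ c) : ‖N‖ ≤ n * c := by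
  rw [Matrix.linfty_opNorm_def]
  have hb : (Finset.univ.sup fun i => ∑ j, ‖N i j‖₊) ≤ (⟨n * c, by positivity⟩ : NNReal) := by
    apply Finset.sup_le
    intro i _
    refine NNReal.coe_le_coe.mp ?_; rw [NNReal.coe_sum]
    simp only [coe_nnnorm, NNReal.coe_mk]
    calc ∑ j, ‖N i j‖ ≤ ∑ _j : Fin n, c := Finset.sum_le_sum fun j _ => h i j
      _ = n * c := by rw [Finset.sum_const, Finset.card_univ, Fintype.card_fin, nsmul_eq_mul]
  exact_mod_cast hb

lemma row_sum_le_norm (N : Matrix (Fin n) (Fin n) ℂ) (i : Fin n) : ∑ j, ‖N i j‖ ≤ ‖N‖ := by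
  rw [Matrix.linfty_opNorm_def]
  have hb : (∑ j, ‖N i j‖₊) ≤ Finset.univ.sup fun i => ∑ j, ‖N i j‖₊ :=
    Finset.le_sup (f := fun i => ∑ j, ‖N i j‖₊) (Finset.mem_univ i)
  calc ∑ j, ‖N i j‖ = ((∑ j, ‖N i j‖₊ : NNReal) : ℝ) := by
        rw [NNReal.coe_sum]; simp only [coe_nnnorm]
    _ ≤ _ := NNReal.coe_le_coe.mpr hb

lemma specRad_le_of_dominated (hn : 0 < n) {P A : Matrix (Fin n) (Fin n) ℝ}
    {v : Fin n → ℝ} {r V : ℝ}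
    (hP0 : ∀ i j, 0 ≤ P i j) (hPA : ∀ i j, P i j ≤ A i j)
    (hv1 : ∀ i, 1 ≤ v i) (hvV : ∀ i, v i ≤ V) (hr0 : 0 < r)
    (hAv : ∀ i, (A *ᵥ v) i ≤ r * v i) : specRad P ≤ r := by
  haveI : Nonempty (Fin n) := ⟨⟨0, hn⟩⟩
  have hv0 : ∀ i, 0 ≤ v i := fun i => le_trans zero_le_one (hv1 i)
  have hV1 : 1 ≤ V := le_trans (hv1 ⟨0, hn⟩) (hvV ⟨0, hn⟩)
  have hPv : ∀ i, (P *ᵥ v) i ≤ r * v i := by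
    intro i
    refine le_trans ?_ (hAv i)
    simp only [Matrix.mulVec, dotProduct]
    exact Finset.sum_le_sum fun j _ => mul_le_mul_of_nonneg_right (hPA i j) (hv0 j)
  have hpow := pow_mulVec_le hP0 hv0 hr0.le hPv
  have hentry : ∀ k i j, (P ^ k) i j ≤ r ^ k * V := by
    intro k i j
    have h1 : (P ^ k) i j ≤ (P ^ k) i j * v j :=
      le_mul_of_one_le_right (pow_entry_nonneg hP0 k i j) (hv1 j)
    have h2 : (P ^ k) i j * v j ≤ ((P ^ k) *ᵥ v) i := by
      simp only [Matrix.mulVec, dotProduct]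
      exact Finset.single_le_sum
        (f := fun l => (P ^ k) i l * v l)
        (fun l _ => mul_nonneg (pow_entry_nonneg hP0 k i l) (hv0 l)) (Finset.mem_univ j)
    have h3 := hpow k i
    have h4 : r ^ k * v i ≤ r ^ k * V :=
      mul_le_mul_of_nonneg_left (hvV i) (pow_nonneg hr0.le k)
    linarith
  apply Real.sSup_le _ hr0.le
  rintro y ⟨z, hz, rfl⟩
  by_contra hlt
  push_neg at hlt
  have h1 : 1 < ‖z‖ / r := (one_lt_div hr0).mpr hlt
  obtain ⟨k, hk⟩ := pow_unbounded_of_one_lt ((n : ℝ) * V) h1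
  have hzk : z ^ k ∈ spectrum ℂ ((P.map (algebraMap ℝ ℂ)) ^ k) :=
    spectrum.pow_image_subset (P.map (algebraMap ℝ ℂ)) k ⟨z, hz, rfl⟩
  have hnorm : ‖z ^ k‖ ≤ ‖(P.map (algebraMap ℝ ℂ)) ^ k‖ :=
    spectrum.norm_le_norm_of_mem hzk
  have hNb : ‖(P.map (algebraMap ℝ ℂ)) ^ k‖ ≤ n * (r ^ k * V) := by
    rw [map_pow_comm]
    apply norm_le_of_entries _ _ (by positivity)
    intro i j
    rw [Matrix.map_apply,
      show algebraMap ℝ ℂ ((P ^ k) i j) = (((P ^ k) i j : ℝ) : ℂ) from rfl,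
      Complex.norm_real, Real.norm_eq_abs, abs_of_nonneg (pow_entry_nonneg hP0 k i j)]
    exact hentry k i j
  rw [norm_pow] at hnorm
  have habs : ‖z‖ ^ k ≤ (n : ℝ) * (r ^ k * V) := le_trans hnorm hNb
  have hcontra : (‖z‖ / r) ^ k ≤ (n : ℝ) * V := by
    rw [div_pow, div_le_iff₀ (pow_pos hr0 k)]
    calc ‖z‖ ^ k ≤ (n : ℝ) * (r ^ k * V) := habs
      _ = (n : ℝ) * V * r ^ k := by ring
  linarith

lemma abs_le_specRad (hn : 0 < n) (A : Matrix (Fin n) (Fin n) ℝ) {z : ℂ}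
    (hz : z ∈ spectrum ℂ (A.map (algebraMap ℝ ℂ))) : ‖z‖ ≤ specRad A := by
  haveI : Nonempty (Fin n) := ⟨⟨0, hn⟩⟩
  have hmem : ‖z‖ ∈ (fun z : ℂ => ‖z‖) '' spectrum ℂ (A.map (algebraMap ℝ ℂ)) :=
    ⟨z, hz, rfl⟩
  apply le_csSup _ hmem
  refine ⟨‖A.map (algebraMap ℝ ℂ)‖, ?_⟩
  rintro y ⟨w, hw, rfl⟩
  exact spectrum.norm_le_norm_of_mem hw

lemma exists_pow_rowsum_small (hn : 0 < n) (A : Matrix (Fin n) (Fin n) ℝ)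
    (hA0 : ∀ i j, 0 ≤ A i j) (hR : specRad A < 1) :
    ∃ N, 1 ≤ N ∧ ∀ i, ∑ j, (A ^ N) i j ≤ 1/2 := by
  haveI : Nonempty (Fin n) := ⟨⟨0, hn⟩⟩
  set a := A.map (algebraMap ℝ ℂ) with ha
  have hρ : spectralRadius ℂ a < 1 := by
    have hle : spectralRadius ℂ a ≤ ENNReal.ofReal (specRad A) := by
      rw [spectralRadius]
      refine iSup₂_le fun z hz => ?_
      rw [← enorm_eq_nnnorm, ← ofReal_norm]
      exact ENNReal.ofReal_le_ofReal (by
        exact abs_le_specRad hn A hz)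
    refine lt_of_le_of_lt hle ?_
    rwa [ENNReal.ofReal_lt_one]
  have hgel := spectrum.pow_nnnorm_pow_one_div_tendsto_nhds_spectralRadius a
  obtain ⟨c, hc1, hc2⟩ := exists_between hρ
  have hev1 : ∀ᶠ k : ℕ in atTop, (‖a ^ k‖₊ : ENNReal) ^ (1/(k:ℝ)) < c :=
    hgel.eventually_lt_const hc1
  have hev2 : ∀ᶠ k : ℕ in atTop, c ^ k < ENNReal.ofReal (1/2) :=
    (ENNReal.tendsto_pow_atTop_nhds_zero_of_lt_one hc2).eventually_lt_const
      (by simp)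
  have hev3 : ∀ᶠ k : ℕ in atTop, 1 ≤ k := eventually_ge_atTop 1
  obtain ⟨N, hNall⟩ := (hev1.and (hev2.and hev3)).exists
  have h1 := hNall.1
  have h2 := hNall.2.1
  have h3 := hNall.2.2
  refine ⟨N, h3, ?_⟩
  have hN0 : (N : ℝ) ≠ 0 := by positivity
  -- ‖a^N‖₊ < c^N
  have hNpos : (0:ℝ) < (N:ℝ) := by positivity
  have hlt : (‖a ^ N‖₊ : ENNReal) < c ^ (N:ℝ) := by
    have hh := ENNReal.rpow_lt_rpow h1 hNpos
    calc (‖a ^ N‖₊ : ENNReal) = ((‖a ^ N‖₊ : ENNReal) ^ (1/(N:ℝ))) ^ (N:ℝ) := by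
          rw [← ENNReal.rpow_mul, one_div, inv_mul_cancel₀ hN0, ENNReal.rpow_one]
      _ < c ^ (N:ℝ) := hh
  rw [ENNReal.rpow_natCast] at hlt
  have hlt' : (‖a ^ N‖₊ : ENNReal) < c ^ N := hlt
  have hnorm : ‖a ^ N‖ < 1/2 := by
    have : ENNReal.ofReal ‖a ^ N‖ < ENNReal.ofReal (1/2) := by
      rw [ofReal_norm, enorm_eq_nnnorm]
      exact lt_trans hlt h2
    rwa [ENNReal.ofReal_lt_ofReal_iff (by norm_num)] at this
  intro i
  have hrow := row_sum_le_norm (a ^ N) i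
  have heq : ∑ j, ‖(a ^ N) i j‖ = ∑ j, (A ^ N) i j := by
    apply Finset.sum_congr rfl
    intro j _
    rw [ha, map_pow_comm, Matrix.map_apply]
    rw [show algebraMap ℝ ℂ ((A ^ N) i j) = (((A ^ N) i j : ℝ) : ℂ) from rfl,
      Complex.norm_real, Real.norm_eq_abs, abs_of_nonneg (pow_entry_nonneg hA0 N i j)]
  rw [heq] at hrow
  linarith

lemma exists_v (hn : 0 < n) (A : Matrix (Fin n) (Fin n) ℝ)
    (hA0 : ∀ i j, 0 ≤ A i j) (hR : specRad A < 1) :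
    ∃ v : Fin n → ℝ, (∀ i, 1 ≤ v i) ∧ (∀ i, (A *ᵥ v) i ≤ v i - 1/2) := by
  obtain ⟨N, hN1, hN⟩ := exists_pow_rowsum_small hn A hA0 hR
  set e : Fin n → ℝ := fun _ => 1 with he
  set v : Fin n → ℝ := fun i => ∑ k ∈ Finset.range N, ((A ^ k) *ᵥ e) i with hv
  have hterm : ∀ k i, 0 ≤ ((A ^ k) *ᵥ e) i := by
    intro k i
    simp only [Matrix.mulVec, dotProduct]
    apply Finset.sum_nonneg
    intro j _
    exact mul_nonneg (pow_entry_nonneg hA0 k i j) (by norm_num [he])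
  have hv1 : ∀ i, 1 ≤ v i := by
    intro i
    rw [hv]
    have h0 : ((A ^ 0) *ᵥ e) i = 1 := by
      rw [pow_zero, Matrix.one_mulVec]
    calc (1:ℝ) = ∑ k ∈ Finset.range 1, ((A ^ k) *ᵥ e) i := by
          rw [Finset.sum_range_one, h0]
      _ ≤ ∑ k ∈ Finset.range N, ((A ^ k) *ᵥ e) i :=
          Finset.sum_le_sum_of_subset_of_nonneg
            (Finset.range_subset_range.mpr hN1) (fun k _ _ => hterm k i)
  refine ⟨v, hv1, ?_⟩
  intro i
  have hAv : (A *ᵥ v) i = ∑ k ∈ Finset.range N, ((A ^ (k+1)) *ᵥ e) i := by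
    rw [hv]
    have : A *ᵥ (fun i => ∑ k ∈ Finset.range N, ((A ^ k) *ᵥ e) i) =
        fun i => ∑ k ∈ Finset.range N, (A *ᵥ ((A ^ k) *ᵥ e)) i := by
      ext i'
      simp only [Matrix.mulVec, dotProduct, Finset.mul_sum]
      rw [Finset.sum_comm]
    rw [this]
    apply Finset.sum_congr rfl
    intro k _
    rw [Matrix.mulVec_mulVec, ← pow_succ']
  have hf0 : ((A ^ 0) *ᵥ e) i = 1 := by rw [pow_zero, Matrix.one_mulVec]
  have h1 := Finset.sum_range_succ' (fun k => ((A ^ k) *ᵥ e) i) N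
  have h2 := Finset.sum_range_succ (fun k => ((A ^ k) *ᵥ e) i) N
  have htel : ∑ k ∈ Finset.range N, ((A ^ (k+1)) *ᵥ e) i =
      v i - 1 + ((A ^ N) *ᵥ e) i := by
    rw [hv]
    simp only
    rw [hf0] at h1
    linarith
  have hrow : ((A ^ N) *ᵥ e) i ≤ 1/2 := by
    have : ((A ^ N) *ᵥ e) i = ∑ j, (A ^ N) i j := by
      simp [Matrix.mulVec, dotProduct, he]
    rw [this]
    exact hN i
  rw [hAv, htel]
  linarith

end Spectral


section Model

variable {n : ℕ} (M : EpiOpModel n)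

/-- entrywise description of `D(o)⁻¹ B(o)`. -/
lemma prod_entry (o : Fin n → ℝ)
    (h : ∀ i, M.δmin + (M.δ i - M.δmin) * (o i + 1/2) ≠ 0) (i j : Fin n) :
    ((M.Dmat o)⁻¹ * M.Bmat o) i j =
      (M.δmin + (M.δ i - M.δmin) * (o i + 1/2))⁻¹ *
        (M.B i j - (o i + 1/2) * (M.B i j - M.βmin * M.Atil i j)) := by
  have hinv : (M.Dmat o)⁻¹ =
      Matrix.diagonal (fun i => (M.δmin + (M.δ i - M.δmin) * (o i + 1/2))⁻¹) := by
    apply Matrix.inv_eq_left_inv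
    rw [EpiOpModel.Dmat, Matrix.diagonal_mul_diagonal]
    have : (fun i => (M.δmin + (M.δ i - M.δmin) * (o i + 1/2))⁻¹ *
        (M.δmin + (M.δ i - M.δmin) * (o i + 1/2))) = fun _ => (1:ℝ) :=
      funext fun i => inv_mul_cancel₀ (h i)
    rw [this, Matrix.diagonal_one]
  rw [hinv, Matrix.diagonal_mul]
  rfl

lemma dfun_ge (o : Fin n → ℝ) (i : Fin n) (ho : -(1/2) ≤ o i) :
    M.δmin ≤ M.δmin + (M.δ i - M.δmin) * (o i + 1/2) := by
  have h1 : 0 ≤ M.δ i - M.δmin := by linarith [M.δ_ge i]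
  nlinarith

lemma Bfun_nonneg (o : Fin n → ℝ) (i j : Fin n) (ho : o i ≤ 1/2) :
    0 ≤ M.B i j - (o i + 1/2) * (M.B i j - M.βmin * M.Atil i j) := by
  have h1 := Bmin_le_B M i j
  have h2 := Bmin_nonneg M i j
  nlinarith

lemma Bfun_le (o : Fin n → ℝ) (i j : Fin n) (ho : -(1/2) ≤ o i) :
    M.B i j - (o i + 1/2) * (M.B i j - M.βmin * M.Atil i j) ≤ M.B i j := by
  have h1 := Bmin_le_B M i j
  nlinarith

end Model


section Decay

variable {n : ℕ} (M : EpiOpModel n)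

lemma decay (x o : ℝ → Fin n → ℝ) (BF : Fin n → Fin n → ℝ)
    (hx : ∀ t : ℝ, ∀ i : Fin n, HasDerivAt (fun s => x s i) (M.fx (x t) (o t) i) t)
    (hbox : ∀ t, 0 ≤ t →
      (∀ i, 0 ≤ x t i ∧ x t i ≤ 1) ∧ (∀ i, -(1/2) ≤ o t i ∧ o t i ≤ 1/2))
    (dd : Fin n → ℝ)
    (hdd : ∀ t, 0 ≤ t → ∀ i, M.δmin ≤ dd i ∧
      dd i ≤ M.δmin + (M.δ i - M.δmin) * (o t i + 1/2))
    (hBB : ∀ t, 0 ≤ t → ∀ i j,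
      M.B i j - (o t i + 1/2) * (M.B i j - M.βmin * M.Atil i j) ≤ BF i j)
    (hBF0 : ∀ i j, 0 ≤ BF i j)
    (v : Fin n → ℝ) (hv1 : ∀ i, 1 ≤ v i)
    (hBv : ∀ i, (∑ j, BF i j * v j) ≤ dd i * (v i - 1/2))
    (α : ℝ) (hα0 : 0 < α) (hαv : ∀ i, 2 * α * v i < M.δmin) :
    ∀ t, 0 ≤ t → ∀ i, x t i ≤ 2 * v i * Real.exp (-α * t) := by
  have hcx : ∀ i, Continuous fun t => x t i := fun i =>
    continuous_iff_continuousAt.mpr fun t => (hx t i).continuousAt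
  have hvpos : ∀ i, 0 < v i := fun i => lt_of_lt_of_le one_pos (hv1 i)
  set u : Fin n → ℝ → ℝ := fun i t => 2 * v i * Real.exp (-α * t) with hu
  have huc : ∀ i, Continuous (u i) := fun i =>
    continuous_const.mul (Real.continuous_exp.comp (continuous_const.mul continuous_id))
  have hud : ∀ i τ, HasDerivAt (u i) (-α * u i τ) τ := by
    intro i τ
    have h1 : HasDerivAt (fun t : ℝ => -α * t) (-α) τ := by
      simpa using (hasDerivAt_id τ).const_mul (-α)
    have h2 := ((Real.hasDerivAt_exp (-α * τ)).comp τ h1).const_mul (2 * v i)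
    exact h2.congr_deriv (by simp only [hu]; ring)
  suffices hstrict : ∀ t, 0 ≤ t → ∀ i, x t i < u i t by
    intro t ht i
    exact (hstrict t ht i).le
  by_contra hcon
  push_neg at hcon
  obtain ⟨t, ht, i₁, hi₁⟩ := hcon
  set Q : ℝ → Prop := fun s => ∀ i, x s i < u i s with hQdef
  have hQopen : IsOpen {s | Q s} := by
    rw [hQdef]
    rw [Set.setOf_forall]
    exact isOpen_iInter_of_finite fun i => isOpen_lt (hcx i) (huc i)
  set S : Set ℝ := Ici 0 ∩ {s | Q s}ᶜ with hSdef
  have hSne : S.Nonempty := ⟨t, ht, fun hq => absurd (hq i₁) (not_lt.mpr hi₁)⟩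
  have hScl : IsClosed S := isClosed_Ici.inter hQopen.isClosed_compl
  have hSbdd : BddBelow S := ⟨0, fun s hs => hs.1⟩
  set τ := sInf S with hτdef
  have hτS : τ ∈ S := hScl.csInf_mem hSne hSbdd
  have hτ0 : 0 ≤ τ := hτS.1
  have hQ0 : Q 0 := by
    intro i
    have h2 := ((hbox 0 (le_refl 0)).1 i).2
    have he : u i 0 = 2 * v i := by simp [hu]
    rw [he]
    have := hv1 i
    linarith
  have hτpos : 0 < τ := by
    rcases lt_or_eq_of_le hτ0 with h | h
    · exact h
    · exact absurd hQ0 (h ▸ hτS.2)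
  have hbefore : ∀ s, 0 ≤ s → s < τ → Q s := by
    intro s h0 hlt
    by_contra hq
    have : τ ≤ s := csInf_le hSbdd ⟨h0, hq⟩
    linarith
  have hclose : ∀ i, x τ i ≤ u i τ := fun i =>
    le_at_sup (hcx i) (huc i) hτpos fun s h0 hlt => (hbefore s h0 hlt i).le
  have hnQ : ¬ Q τ := hτS.2
  rw [hQdef] at hnQ
  obtain ⟨i, hi⟩ := not_forall.mp hnQ
  push_neg at hi
  have heq : x τ i = u i τ := le_antisymm (hclose i) hi
  have hd : HasDerivAt (fun s => u i s - x s i) (-α * u i τ - M.fx (x τ) (o τ) i) τ :=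
    (hud i τ).sub (hx τ i)
  have hcon2 := deriv_nonpos_at_contact hτpos hd (by rw [heq]; ring)
    (fun s h0 hlt => by have := hbefore s h0 hlt i; linarith)
  have hbx := (hbox τ hτ0).1
  have hbo := (hbox τ hτ0).2
  have hE : 0 < Real.exp (-α * τ) := Real.exp_pos _
  have hdτ := hdd τ hτ0
  have hBτ := hBB τ hτ0
  have huτ : ∀ j, u j τ = 2 * v j * Real.exp (-α * τ) := fun j => rfl
  have hS1 : ∀ j ∈ Finset.univ,
      (M.B i j - (o τ i + 1/2) * (M.B i j - M.βmin * M.Atil i j)) * x τ j ≤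
        BF i j * v j * (2 * Real.exp (-α * τ)) := by
    intro j _
    have hb1 := hBτ i j
    have hxj0 := (hbx j).1
    have hxuj : x τ j ≤ u j τ := hclose j
    calc (M.B i j - (o τ i + 1/2) * (M.B i j - M.βmin * M.Atil i j)) * x τ j
        ≤ BF i j * x τ j := mul_le_mul_of_nonneg_right hb1 hxj0
      _ ≤ BF i j * u j τ := mul_le_mul_of_nonneg_left hxuj (hBF0 i j)
      _ = BF i j * v j * (2 * Real.exp (-α * τ)) := by rw [huτ j]; ring
  have hsum : (∑ j, (M.B i j - (o τ i + 1/2) * (M.B i j - M.βmin * M.Atil i j)) * x τ j)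
      ≤ dd i * (v i - 1/2) * (2 * Real.exp (-α * τ)) := by
    calc (∑ j, (M.B i j - (o τ i + 1/2) * (M.B i j - M.βmin * M.Atil i j)) * x τ j)
        ≤ ∑ j, BF i j * v j * (2 * Real.exp (-α * τ)) := Finset.sum_le_sum hS1
      _ = (∑ j, BF i j * v j) * (2 * Real.exp (-α * τ)) := by rw [← Finset.sum_mul]
      _ ≤ dd i * (v i - 1/2) * (2 * Real.exp (-α * τ)) :=
          mul_le_mul_of_nonneg_right (hBv i) (by positivity)
  have hsum0 : 0 ≤ ∑ j, (M.B i j - (o τ i + 1/2) * (M.B i j - M.βmin * M.Atil i j)) * x τ j :=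
    Finset.sum_nonneg fun j _ =>
      mul_nonneg (Bfun_nonneg M (o τ) i j (hbo i).2) ((hbx j).1)
  have hx_eq : x τ i = 2 * v i * Real.exp (-α * τ) := by rw [heq, huτ i]
  have hfx : M.fx (x τ) (o τ) i ≤ -(M.δmin * Real.exp (-α * τ)) := by
    rw [fx_apply, hx_eq]
    have hδ := (hdτ i).1
    have hle := (hdτ i).2
    have h2' := mul_le_mul_of_nonneg_right hle
      (by have := hvpos i; positivity : (0:ℝ) ≤ 2 * v i * Real.exp (-α * τ))
    nlinarith [hsum, hsum0, h2',
      mul_nonneg (mul_nonneg (by linarith [hvpos i] : (0:ℝ) ≤ 2 * v i) hE.le) hsum0,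
      mul_nonneg (sub_nonneg.mpr hδ) hE.le]
  rw [huτ i] at hcon2
  nlinarith [mul_pos (sub_pos.mpr (hαv i)) hE]

end Decay

end StubAux


/-- Corollary 5, selection of extreme stubborn communities:
let `⃗o` have entries in `{−0.5, 0.5}`, with both values present, and suppose
`R^{⃗o} < 1`.  If the communities `i` with `⃗o_i = 0.5` are made stubborn with
opinion fixed at `0.5` for all time, while the remaining communities' opinions
evolve freely, then `R^{o(t)} < 1` for all `t ≥ 0` and the system reaches a
healthy state, `x(t) → 0`. -/
theorem extreme_stubborn_selection {n : ℕ} (M : EpiOpModel n)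
    (ov : Fin n → ℝ) (hov : ∀ i, ov i = -(1/2) ∨ ov i = (1/2))
    (hpos : ∃ i, ov i = (1/2)) (hneg : ∃ i, ov i = -(1/2))
    (hR : M.Rnum ov < 1)
    (x o : ℝ → Fin n → ℝ)
    (hx : ∀ t : ℝ, ∀ i : Fin n,
      HasDerivAt (fun s => x s i) (M.fx (x t) (o t) i) t)
    (hstub : ∀ i : Fin n, ov i = (1/2) → ∀ t : ℝ, o t i = (1/2))
    (hfree : ∀ i : Fin n, ov i = -(1/2) → ∀ t : ℝ,
      HasDerivAt (fun s => o s i) (M.fo (x t) (o t) i) t)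
    (hbox0 : M.InBox (x 0) (o 0)) :
    (∀ t : ℝ, 0 ≤ t → M.Rnum (o t) < 1) ∧
    Filter.Tendsto x Filter.atTop (nhds 0) := by
  classical
  obtain ⟨i₀, hi₀⟩ := hpos
  have hn : 0 < n := i₀.pos
  haveI : Nonempty (Fin n) := ⟨i₀⟩
  have hbox := StubAux.invariance M ov hov x o hx hstub hfree hbox0
  have hov_ge : ∀ i, -(1/2 : ℝ) ≤ ov i := by
    intro i; rcases hov i with h | h <;> rw [h] <;> norm_num
  have hov_le : ∀ i, ov i ≤ (1/2 : ℝ) := by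
    intro i; rcases hov i with h | h <;> rw [h] <;> norm_num
  have hd0 : ∀ i, M.δmin ≤ M.δmin + (M.δ i - M.δmin) * (ov i + 1/2) :=
    fun i => StubAux.dfun_ge M ov i (hov_ge i)
  have hdpos : ∀ i, 0 < M.δmin + (M.δ i - M.δmin) * (ov i + 1/2) :=
    fun i => lt_of_lt_of_le M.δmin_pos (hd0 i)
  have hdne : ∀ i, M.δmin + (M.δ i - M.δmin) * (ov i + 1/2) ≠ 0 :=
    fun i => (hdpos i).ne'
  have hAs_entry : ∀ i j, ((M.Dmat ov)⁻¹ * M.Bmat ov) i j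
      = (M.δmin + (M.δ i - M.δmin) * (ov i + 1/2))⁻¹ *
        (M.B i j - (ov i + 1/2) * (M.B i j - M.βmin * M.Atil i j)) :=
    fun i j => StubAux.prod_entry M ov hdne i j
  have hAs0 : ∀ i j, 0 ≤ ((M.Dmat ov)⁻¹ * M.Bmat ov) i j := by
    intro i j
    rw [hAs_entry]
    exact mul_nonneg (inv_nonneg.mpr (hdpos i).le)
      (StubAux.Bfun_nonneg M ov i j (hov_le i))
  have hR' : specRad ((M.Dmat ov)⁻¹ * M.Bmat ov) < 1 := by
    simpa [EpiOpModel.Rnum] using hR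
  obtain ⟨v, hv1, hAv⟩ := StubAux.exists_v hn _ hAs0 hR'
  have hne' : (Finset.univ : Finset (Fin n)).Nonempty := Finset.univ_nonempty
  set V := Finset.univ.sup' hne' v with hV
  have hvV : ∀ i, v i ≤ V := fun i => Finset.le_sup' v (Finset.mem_univ i)
  have hV1 : 1 ≤ V := le_trans (hv1 i₀) (hvV i₀)
  have hVpos : 0 < V := lt_of_lt_of_le one_pos hV1
  have hr0 : 0 < 1 - 1/(2*V) := by
    have h1 : 1/(2*V) ≤ 1/2 := by
      rw [div_le_div_iff₀ (by positivity) (by norm_num)]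
      linarith
    linarith
  have hr1 : 1 - 1/(2*V) < 1 := by
    have : 0 < 1/(2*V) := by positivity
    linarith
  have hAvr : ∀ i, (((M.Dmat ov)⁻¹ * M.Bmat ov) *ᵥ v) i ≤ (1 - 1/(2*V)) * v i := by
    intro i
    have h := hAv i
    have h2 := hvV i
    have h3 := hv1 i
    have hkey : v i - 1/2 ≤ (1 - 1/(2*V)) * v i := by
      have hm : v i * (1/(2*V)) ≤ V * (1/(2*V)) :=
        mul_le_mul_of_nonneg_right h2 (by positivity)
      have hVv : V * (1/(2*V)) = 1/2 := by field_simp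
      nlinarith
    linarith
  -- rowwise comparisons at nonnegative times
  have hdcomp : ∀ t, 0 ≤ t → ∀ i,
      M.δmin + (M.δ i - M.δmin) * (ov i + 1/2) ≤
        M.δmin + (M.δ i - M.δmin) * (o t i + 1/2) := by
    intro t ht i
    rcases hov i with h | h
    · have he : M.δmin + (M.δ i - M.δmin) * (ov i + 1/2) = M.δmin := by rw [h]; ring
      rw [he]
      exact StubAux.dfun_ge M (o t) i (((hbox t ht).2 i).1)
    · rw [hstub i h t, h]
  have hBcomp : ∀ t, 0 ≤ t → ∀ i j,
      M.B i j - (o t i + 1/2) * (M.B i j - M.βmin * M.Atil i j) ≤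
        M.B i j - (ov i + 1/2) * (M.B i j - M.βmin * M.Atil i j) := by
    intro t ht i j
    rcases hov i with h | h
    · have he : M.B i j - (ov i + 1/2) * (M.B i j - M.βmin * M.Atil i j) = M.B i j := by
        rw [h]; ring
      rw [he]
      exact StubAux.Bfun_le M (o t) i j (((hbox t ht).2 i).1)
    · rw [hstub i h t, h]
  constructor
  · -- Part 1: R^{o(t)} < 1
    intro t ht
    have hbt := hbox t ht
    have hot_ge : ∀ i, -(1/2 : ℝ) ≤ o t i := fun i => (hbt.2 i).1
    have hot_le : ∀ i, o t i ≤ (1/2 : ℝ) := fun i => (hbt.2 i).2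
    have hdt_ge : ∀ i, M.δmin ≤ M.δmin + (M.δ i - M.δmin) * (o t i + 1/2) :=
      fun i => StubAux.dfun_ge M (o t) i (hot_ge i)
    have hdtne : ∀ i, M.δmin + (M.δ i - M.δmin) * (o t i + 1/2) ≠ 0 :=
      fun i => (lt_of_lt_of_le M.δmin_pos (hdt_ge i)).ne'
    have hPentry := StubAux.prod_entry M (o t) hdtne
    have hP0 : ∀ i j, 0 ≤ ((M.Dmat (o t))⁻¹ * M.Bmat (o t)) i j := by
      intro i j
      rw [hPentry i j]
      exact mul_nonneg (inv_nonneg.mpr (le_trans M.δmin_pos.le (hdt_ge i)))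
        (StubAux.Bfun_nonneg M (o t) i j (hot_le i))
    have hPA : ∀ i j, ((M.Dmat (o t))⁻¹ * M.Bmat (o t)) i j ≤
        ((M.Dmat ov)⁻¹ * M.Bmat ov) i j := by
      intro i j
      rw [hPentry i j, hAs_entry i j]
      apply mul_le_mul
      · exact inv_anti₀ (hdpos i) (hdcomp t ht i)
      · exact hBcomp t ht i j
      · exact StubAux.Bfun_nonneg M (o t) i j (hot_le i)
      · exact inv_nonneg.mpr (hdpos i).le
    have hle := StubAux.specRad_le_of_dominated hn hP0 hPA hv1 hvV hr0 hAvr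
    have : M.Rnum (o t) = specRad ((M.Dmat (o t))⁻¹ * M.Bmat (o t)) := rfl
    rw [this]
    exact lt_of_le_of_lt hle hr1
  · -- Part 2: x → 0
    have hBv : ∀ i,
        (∑ j, (M.B i j - (ov i + 1/2) * (M.B i j - M.βmin * M.Atil i j)) * v j)
          ≤ (M.δmin + (M.δ i - M.δmin) * (ov i + 1/2)) * (v i - 1/2) := by
      intro i
      have h := hAv i
      have he : (((M.Dmat ov)⁻¹ * M.Bmat ov) *ᵥ v) i
          = (M.δmin + (M.δ i - M.δmin) * (ov i + 1/2))⁻¹ *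
            ∑ j, (M.B i j - (ov i + 1/2) * (M.B i j - M.βmin * M.Atil i j)) * v j := by
        simp only [Matrix.mulVec, dotProduct, hAs_entry, Finset.mul_sum, mul_assoc]
      rw [he] at h
      have hdp := hdpos i
      have hee : (∑ j, (M.B i j - (ov i + 1/2) * (M.B i j - M.βmin * M.Atil i j)) * v j)
          = (M.δmin + (M.δ i - M.δmin) * (ov i + 1/2)) *
            ((M.δmin + (M.δ i - M.δmin) * (ov i + 1/2))⁻¹ *
              ∑ j, (M.B i j - (ov i + 1/2) * (M.B i j - M.βmin * M.Atil i j)) * v j) := by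
        rw [← mul_assoc, mul_inv_cancel₀ (hdne i), one_mul]
      rw [hee]
      exact mul_le_mul_of_nonneg_left h hdp.le
    have hdd : ∀ t, 0 ≤ t → ∀ i,
        M.δmin ≤ M.δmin + (M.δ i - M.δmin) * (ov i + 1/2) ∧
        M.δmin + (M.δ i - M.δmin) * (ov i + 1/2) ≤
          M.δmin + (M.δ i - M.δmin) * (o t i + 1/2) :=
      fun t ht i => ⟨hd0 i, hdcomp t ht i⟩
    have hBF0 : ∀ i j, 0 ≤ M.B i j - (ov i + 1/2) * (M.B i j - M.βmin * M.Atil i j) :=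
      fun i j => StubAux.Bfun_nonneg M ov i j (hov_le i)
    set α := M.δmin / (4*V) with hα
    have hδmin := M.δmin_pos
    have hα0 : 0 < α := by rw [hα]; positivity
    have hαv : ∀ i, 2 * α * v i < M.δmin := by
      intro i
      have h1 := hvV i
      have h2 := hv1 i
      have hre : 2 * α * v i * (4*V) = 2 * M.δmin * v i := by
        rw [hα]; field_simp
      nlinarith [mul_pos hδmin hVpos]
    have hdec := StubAux.decay M x o
      (fun i j => M.B i j - (ov i + 1/2) * (M.B i j - M.βmin * M.Atil i j))
      hx hbox (fun i => M.δmin + (M.δ i - M.δmin) * (ov i + 1/2))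
      hdd (fun t ht i j => hBcomp t ht i j) hBF0 v hv1 hBv α hα0 hαv
    rw [tendsto_pi_nhds]
    intro i
    have hvpos : 0 < v i := lt_of_lt_of_le one_pos (hv1 i)
    have hlim : Tendsto (fun t : ℝ => 2 * v i * Real.exp (-α * t)) atTop (𝓝 0) := by
      have h1 : Tendsto (fun t : ℝ => α * t) atTop atTop :=
        Tendsto.const_mul_atTop hα0 tendsto_id
      have h2 : Tendsto (fun t : ℝ => -α * t) atTop atBot := by
        have hcomp := tendsto_neg_atTop_atBot.comp h1
        have hfe : (fun t : ℝ => -α * t) = (Neg.neg ∘ fun t : ℝ => α * t) := by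
          funext t
          simp [Function.comp]
        rw [hfe]
        exact hcomp
      have h3 := Real.tendsto_exp_atBot.comp h2
      have h4 := h3.const_mul (2 * v i)
      simpa using h4
    have hzero : (0 : Fin n → ℝ) i = 0 := rfl
    rw [hzero]
    apply tendsto_of_tendsto_of_tendsto_of_le_of_le' tendsto_const_nhds hlim
    · filter_upwards [eventually_ge_atTop (0:ℝ)] with t ht
      exact ((hbox t ht).1 i).1
    · filter_upwards [eventually_ge_atTop (0:ℝ)] with t ht
      exact hdec t ht i
end
end
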